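/- arXiv:2211.07151 — 5 statements merged into one kernel-verified Lean document; each statement's English description precedes it below -/
import Mathlib

section
/- Let m ≥ 1 and let a_0, a_1, …, a_m be real numbers. Set e_m = max{ |a_i − a_{i−1}| : i = 1, …, m }. Let σ be a permutation of {0, 1, …, m} such that a_{σ(0)} ≤ a_{σ(1)} ≤ … ≤ a_{σ(m)}, and set d_m = max{ a_{σ(i)} − a_{σ(i−1)} : i = 1, …, m }. Then d_m ≤ e_m. -/
open Classical in
lemma flip_aux (f : ℕ → Prop) (u v : ℕ) (hu : f u) (hv : ¬ f v) :
    ∃ t, (f t ∧ ¬ f (t + 1)) ∨ (¬ f t ∧ f (t + 1)) := by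
  by_contra h
  push_neg at h
  have key : ∀ n, f n ↔ f 0 := by
    intro n
    induction n with
    | zero => exact Iff.rfl
    | succ n ih =>
      have := h n
      tauto
  exact hv ((key v).mpr ((key u).mp hu))

/-- For real numbers `a 0, …, a m` (`m ≥ 1`), if `σ` is a permutation of
`{0, …, m}` sorting the values (`a (σ 0) ≤ … ≤ a (σ m)`), then the largest gap between
consecutive sorted values is at most the largest absolute difference between consecutive
values in the original order. -/
theorem stmt_0 (m : ℕ) (hm : 1 ≤ m) (a : Fin (m + 1) → ℝ)
    (σ : Equiv.Perm (Fin (m + 1)))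
    (hσ : Monotone fun i => a (σ i)) :
    Finset.univ.sup' (Finset.univ_nonempty_iff.mpr ⟨⟨0, hm⟩⟩)
        (fun i : Fin m => a (σ i.succ) - a (σ i.castSucc)) ≤
      Finset.univ.sup' (Finset.univ_nonempty_iff.mpr ⟨⟨0, hm⟩⟩)
        (fun i : Fin m => |a i.succ - a i.castSucc|) := by
  set RHS := Finset.univ.sup' (Finset.univ_nonempty_iff.mpr ⟨⟨0, hm⟩⟩)
      (fun i : Fin m => |a i.succ - a i.castSucc|) with hRHS
  have hRHS0 : (0 : ℝ) ≤ RHS := by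
    have h := Finset.le_sup' (f := fun i : Fin m => |a i.succ - a i.castSucc|) (Finset.mem_univ (⟨0, hm⟩ : Fin m))
    exact le_trans (abs_nonneg _) h
  apply Finset.sup'_le
  intro i _
  set low := a (σ i.castSucc) with hlow
  set high := a (σ i.succ) with hhigh
  by_cases hg : high - low ≤ 0
  · exact hg.trans hRHS0
  push_neg at hg
  have hlt : low < high := by linarith
  -- every value is ≤ low or ≥ high
  have key : ∀ k : Fin (m + 1), a k ≤ low ∨ high ≤ a k := by
    intro k
    rcases le_or_gt ((σ.symm k : Fin (m+1)) : ℕ) (i : ℕ) with h | h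
    · left
      have : a (σ (σ.symm k)) ≤ a (σ i.castSucc) :=
        hσ (show σ.symm k ≤ i.castSucc by simpa [Fin.le_def] using h)
      simpa using this
    · right
      have : a (σ i.succ) ≤ a (σ (σ.symm k)) :=
        hσ (show i.succ ≤ σ.symm k by simpa [Fin.le_def] using h)
      simpa using this
  set P : Fin (m + 1) → Prop := fun k => a k ≤ low with hP
  have hf : ∀ n : ℕ, min n m < m + 1 := fun n => by omega
  set f : ℕ → Prop := fun n => P ⟨min n m, hf n⟩ with hfdef
  have hu : f ((σ i.castSucc : Fin (m+1)) : ℕ) := by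
    have h1 : (⟨min ((σ i.castSucc : Fin (m+1)) : ℕ) m, hf _⟩ : Fin (m+1)) = σ i.castSucc := by
      apply Fin.ext
      simp only []
      have := (σ i.castSucc).isLt
      omega
    simp only [hfdef, h1]
    exact le_refl low
  have hv : ¬ f ((σ i.succ : Fin (m+1)) : ℕ) := by
    have h1 : (⟨min ((σ i.succ : Fin (m+1)) : ℕ) m, hf _⟩ : Fin (m+1)) = σ i.succ := by
      apply Fin.ext
      simp only []
      have := (σ i.succ).isLt
      omega
    simp only [hfdef, h1]
    exact not_le.mpr hlt
  obtain ⟨t, ht⟩ := flip_aux f _ _ hu hv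
  have htm : t < m := by
    by_contra hc
    push_neg at hc
    have : min t m = min (t + 1) m := by omega
    rw [hfdef] at ht
    simp only [this] at ht
    tauto
  set t' : Fin m := ⟨t, htm⟩ with ht'
  have e1 : (⟨min t m, hf t⟩ : Fin (m+1)) = t'.castSucc := by
    apply Fin.ext; simp [ht']; omega
  have e2 : (⟨min (t+1) m, hf (t+1)⟩ : Fin (m+1)) = t'.succ := by
    apply Fin.ext; simp [ht']; omega
  rw [hfdef] at ht
  simp only [e1, e2, hP] at ht
  have hstep : high - low ≤ |a t'.succ - a t'.castSucc| := by
    rcases ht with ⟨h1, h2⟩ | ⟨h1, h2⟩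
    · rcases key t'.succ with h3 | h3
      · exact absurd h3 h2
      · calc high - low ≤ a t'.succ - a t'.castSucc := by linarith
          _ ≤ |a t'.succ - a t'.castSucc| := le_abs_self _
    · rcases key t'.castSucc with h3 | h3
      · exact absurd h3 h1
      · calc high - low ≤ a t'.castSucc - a t'.succ := by linarith
          _ ≤ |a t'.succ - a t'.castSucc| := by
            rw [abs_sub_comm]; exact le_abs_self _
  have h := Finset.le_sup' (f := fun i : Fin m => |a i.succ - a i.castSucc|) (Finset.mem_univ t')
  exact hstep.trans h
end

section
/- Let a < b be real numbers and let f : [a, b] → ℝ be continuous. For each n ≥ 1 set y_i^{(n)} = f(a + i·(b−a)/n) for i = 0, 1, …, n. Then for every ε > 0 there exists N ∈ ℕ such that for all n > N and every permutation σ of {0, 1, …, n} with y_{σ(0)}^{(n)} ≤ y_{σ(1)}^{(n)} ≤ … ≤ y_{σ(n)}^{(n)}, one has max{ y_{σ(i)}^{(n)} − y_{σ(i−1)}^{(n)} : i = 1, …, n } < ε. In other words, the largest gap between consecutive order statistics of the sample values f(a + i(b−a)/n) tends to 0 as n → ∞. -/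
/-- If a predicate holds at `u` and fails at `v ≥ u`, it "crosses" somewhere in between. -/
lemma aux_cross (Q : ℕ → Prop) : ∀ v u, u ≤ v → Q u → ¬ Q v →
    ∃ k, u ≤ k ∧ k + 1 ≤ v ∧ Q k ∧ ¬ Q (k + 1) := by
  intro v
  induction v with
  | zero =>
    intro u hu hQ hnQ
    interval_cases u
    exact absurd hQ hnQ
  | succ v ih =>
    intro u hu hQu hnQ
    rcases Nat.lt_or_ge u (v + 1) with h | h
    · by_cases hv : Q v
      · exact ⟨v, Nat.lt_succ_iff.mp h, le_refl _, hv, hnQ⟩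
      · obtain ⟨k, h1, h2, h3, h4⟩ := ih u (Nat.lt_succ_iff.mp h) hQu hv
        exact ⟨k, h1, h2.trans (Nat.le_succ v), h3, h4⟩
    · have : u = v + 1 := le_antisymm hu h
      subst this
      exact absurd hQu hnQ

/-- For `f` continuous on `[a, b]` (`a < b`) and equidistant samples
`y i = f (a + i (b-a)/n)`, the largest gap between consecutive order statistics of the
sample values tends to `0` as `n → ∞`: for every `ε > 0` there is `N` such that for every
`n > N` and every sorting permutation `σ` of the values, all consecutive sorted gaps
are `< ε`. -/
theorem stmt_1 (a b : ℝ) (hab : a < b) (f : ℝ → ℝ)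
    (hf : ContinuousOn f (Set.Icc a b)) :
    ∀ ε > 0, ∃ N : ℕ, ∀ n : ℕ, ∀ hn : N < n,
      ∀ σ : Equiv.Perm (Fin (n + 1)),
        (Monotone fun i => f (a + ((σ i : ℕ) : ℝ) * (b - a) / (n : ℝ))) →
        Finset.univ.sup'
            (Finset.univ_nonempty_iff.mpr ⟨⟨0, Nat.lt_of_le_of_lt (Nat.zero_le N) hn⟩⟩)
            (fun i : Fin n =>
              f (a + ((σ i.succ : ℕ) : ℝ) * (b - a) / (n : ℝ)) -
                f (a + ((σ i.castSucc : ℕ) : ℝ) * (b - a) / (n : ℝ))) < ε := by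
  intro ε hε
  have huc : UniformContinuousOn f (Set.Icc a b) :=
    isCompact_Icc.uniformContinuousOn_of_continuous hf
  obtain ⟨δ, hδ, hδf⟩ := Metric.uniformContinuousOn_iff.mp huc ε hε
  refine ⟨Nat.ceil ((b - a) / δ), ?_⟩
  intro n hn σ hmono
  have hn0 : (0 : ℝ) < (n : ℝ) := by
    have : 0 < n := Nat.lt_of_le_of_lt (Nat.zero_le _) hn
    exact_mod_cast this
  have hstep : (b - a) / (n : ℝ) < δ := by
    have h1 : (b - a) / δ < (n : ℝ) := by
      refine lt_of_le_of_lt (Nat.le_ceil _) ?_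
      exact_mod_cast hn
    rw [div_lt_iff₀ hδ] at h1
    rw [div_lt_iff₀ hn0]
    linarith
  set y : ℕ → ℝ := fun m => f (a + (m : ℝ) * (b - a) / (n : ℝ)) with hy
  have hmem : ∀ m : ℕ, m ≤ n → a + (m : ℝ) * (b - a) / (n : ℝ) ∈ Set.Icc a b := by
    intro m hm
    have hm' : (m : ℝ) ≤ (n : ℝ) := by exact_mod_cast hm
    have hba : (0:ℝ) ≤ b - a := by linarith
    have h0 : 0 ≤ (m : ℝ) * (b - a) / (n : ℝ) :=
      div_nonneg (mul_nonneg (Nat.cast_nonneg m) hba) hn0.le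
    constructor
    · linarith
    · have : (m : ℝ) * (b - a) / (n : ℝ) ≤ b - a := by
        rw [div_le_iff₀ hn0]
        nlinarith
      linarith
  have hadj : ∀ k : ℕ, k + 1 ≤ n → |y (k + 1) - y k| < ε := by
    intro k hk
    have h1 := hmem (k + 1) hk
    have h2 := hmem k (Nat.le_of_succ_le hk)
    have hd := hδf _ h1 _ h2 ?_
    · rwa [Real.dist_eq] at hd
    · rw [Real.dist_eq]
      have : a + ((k : ℕ) + 1 : ℝ) * (b - a) / (n : ℝ) - (a + (k : ℝ) * (b - a) / (n : ℝ))
          = (b - a) / (n : ℝ) := by ring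
      push_cast
      rw [this, abs_of_nonneg (div_nonneg (by linarith) hn0.le)]
      exact hstep
  rw [Finset.sup'_lt_iff]
  intro i _
  show y (σ i.succ : ℕ) - y (σ i.castSucc : ℕ) < ε
  set Q : ℕ → Prop := fun m => ∃ h : m < n + 1, σ.symm ⟨m, h⟩ ≤ i.castSucc with hQ
  have hQu : Q (σ i.castSucc : ℕ) := by
    refine ⟨(σ i.castSucc).isLt, ?_⟩
    simp
  have hQv : ¬ Q (σ i.succ : ℕ) := by
    rintro ⟨h, hle⟩
    simp only [Fin.eta, Equiv.symm_apply_apply] at hle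
    exact absurd ((Fin.castSucc_lt_succ : i.castSucc < i.succ).trans_le' hle).false (by simp)
  -- find an adjacent crossing pair
  have key : ∃ k : ℕ, k + 1 ≤ n ∧
      ((Q k ∧ ¬ Q (k + 1)) ∨ (¬ Q k ∧ Q (k + 1))) := by
    rcases le_or_gt (σ i.castSucc : ℕ) (σ i.succ : ℕ) with h | h
    · obtain ⟨k, _, h2, h3, h4⟩ := aux_cross Q _ _ h hQu hQv
      exact ⟨k, h2.trans (Nat.lt_succ_iff.mp (σ i.succ).isLt), Or.inl ⟨h3, h4⟩⟩
    · obtain ⟨k, _, h2, h3, h4⟩ := aux_cross (fun m => ¬ Q m) _ _ h.le hQv (not_not_intro hQu)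
      exact ⟨k, h2.trans (Nat.lt_succ_iff.mp (σ i.castSucc).isLt),
        Or.inr ⟨h3, not_not.mp h4⟩⟩
  obtain ⟨k, hk, hcase⟩ := key
  have hk1 : k < n + 1 := by omega
  have hk2 : k + 1 < n + 1 := by omega
  have hlow : ∀ (m : ℕ) (hm : m < n + 1), Q m → y m ≤ y (σ i.castSucc : ℕ) := by
    intro m hm ⟨h', hle⟩
    have := hmono hle
    simpa using this
  have hhigh : ∀ (m : ℕ) (hm : m < n + 1), ¬ Q m → y (σ i.succ : ℕ) ≤ y m := by
    intro m hm hnq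
    have hle : i.succ ≤ σ.symm ⟨m, hm⟩ := by
      rw [← Fin.castSucc_lt_iff_succ_le]
      by_contra hc
      exact hnq ⟨hm, le_of_not_gt hc⟩
    have := hmono hle
    simpa using this
  have habs := hadj k hk
  rcases hcase with ⟨hq, hnq⟩ | ⟨hnq, hq⟩
  · have h1 := hlow k hk1 hq
    have h2 := hhigh (k + 1) hk2 hnq
    have h3 : y (k + 1) - y k ≤ |y (k + 1) - y k| := le_abs_self _
    linarith
  · have h1 := hlow (k + 1) hk2 hq
    have h2 := hhigh k hk1 hnq
    have h3 : y k - y (k + 1) ≤ |y (k + 1) - y k| := by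
      rw [abs_sub_comm]; exact le_abs_self _
    linarith
end

section
/- Let a < b, let f : [a, b] → ℝ be continuous and strictly increasing, and fix n ≥ 1. With x_i^{(n)} = a + i(b−a)/n, y_i^{(n)} = f(x_i^{(n)}), c = f(a), d = f(b), the hat functions A_i^{(n)}, B_i^{(n)}, R_n(x, y) = max_{0≤i≤n} A_i^{(n)}(x)·B_i^{(n)}(y), and E_n(x) = (∫_c^d y·R_n(x, y) dy)/(∫_c^d R_n(x, y) dy), one has for every x ∈ [a, b]: |E_n(x) − f(x)| ≤ 3 · max{ y_i^{(n)} − y_{i−1}^{(n)} : i = 1, …, n }. -/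
open scoped Classical

/-- The equidistant node `x_i^{(n)} = a + i (b-a)/n` of `[a, b]`. -/
noncomputable def nodes (a b : ℝ) (n i : ℕ) : ℝ := a + (i : ℝ) * (b - a) / (n : ℝ)

/-- The triangular hat function `A_i^{(n)}(x) = max (0, 1 - (n/(b-a)) |x - x_i^{(n)}|)`. -/
noncomputable def hatA (a b : ℝ) (n i : ℕ) (x : ℝ) : ℝ :=
  max 0 (1 - ((n : ℝ) / (b - a)) * |x - nodes a b n i|)

/-- The hat function `B_i^{(n)}` at the strictly increasing nodes `y 0 < y 1 < … < y n`:
it rises linearly from `y (i-1)` to `y i`, falls linearly from `y i` to `y (i+1)`, and is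
`0` otherwise; for `i = 0` only the falling piece is present and for `i = n` only the
rising piece is present. -/
noncomputable def hatB (n : ℕ) (y : ℕ → ℝ) (i : ℕ) (t : ℝ) : ℝ :=
  if i ≠ 0 ∧ y (i - 1) ≤ t ∧ t ≤ y i then (t - y (i - 1)) / (y i - y (i - 1))
  else if i ≠ n ∧ y i ≤ t ∧ t ≤ y (i + 1) then (y (i + 1) - t) / (y (i + 1) - y i)
  else 0

/-- The joint membership function `R_n(x, t) = max_{0 ≤ i ≤ n} A_i^{(n)}(x) B_i^{(n)}(t)`. -/
noncomputable def Rfun (a b : ℝ) (n : ℕ) (y : ℕ → ℝ) (x t : ℝ) : ℝ :=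
  (Finset.range (n + 1)).sup' Finset.nonempty_range_add_one
    (fun i => hatA a b n i x * hatB n y i t)

open Set

section Aux

variable {a b : ℝ} {n : ℕ}

lemma nodes_zero (a b : ℝ) (n : ℕ) : nodes a b n 0 = a := by simp [nodes]

lemma nodes_last (hn : n ≠ 0) : nodes a b n n = b := by
  have : (n : ℝ) ≠ 0 := Nat.cast_ne_zero.mpr hn
  unfold nodes
  rw [mul_comm, mul_div_assoc, div_self this, mul_one]
  ring

lemma nodes_strictMono (hab : a < b) (hn : n ≠ 0) : StrictMono (nodes a b n) := by
  intro p q h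
  have hn' : (0 : ℝ) < n := Nat.cast_pos.mpr (Nat.pos_of_ne_zero hn)
  have hba : (0 : ℝ) < b - a := sub_pos.mpr hab
  have hpq : (p : ℝ) < q := by exact_mod_cast h
  unfold nodes
  have : (p : ℝ) * (b - a) / n < (q : ℝ) * (b - a) / n := by
    gcongr
  linarith

lemma nodes_mono (hab : a < b) (hn : n ≠ 0) : Monotone (nodes a b n) :=
  (nodes_strictMono hab hn).monotone

lemma nodes_mem (hab : a < b) (hn : n ≠ 0) {i : ℕ} (hi : i ≤ n) :
    nodes a b n i ∈ Icc a b := by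
  constructor
  · have := nodes_mono hab hn (Nat.zero_le i)
    rwa [nodes_zero] at this
  · have := nodes_mono hab hn hi
    rwa [nodes_last hn] at this

lemma nodes_sub (hab : a < b) (hn : n ≠ 0) (i : ℕ) :
    nodes a b n (i + 1) - nodes a b n i = (b - a) / n := by
  have : (n : ℝ) ≠ 0 := Nat.cast_ne_zero.mpr hn
  unfold nodes
  push_cast
  field_simp
  ring

end Aux

section HatA

variable {a b : ℝ} {n : ℕ}

lemma hatA_nonneg (a b : ℝ) (n i : ℕ) (x : ℝ) : 0 ≤ hatA a b n i x := le_max_left _ _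

lemma abs_lt_of_hatA_pos (hab : a < b) (hn : n ≠ 0) {i : ℕ} {x : ℝ}
    (h : 0 < hatA a b n i x) : |x - nodes a b n i| < (b - a) / n := by
  have hn' : (0 : ℝ) < n := Nat.cast_pos.mpr (Nat.pos_of_ne_zero hn)
  have hba : (0 : ℝ) < b - a := sub_pos.mpr hab
  unfold hatA at h
  rcases lt_max_iff.mp h with h' | h'
  · exact absurd h' (lt_irrefl 0)
  have h2 : ((n : ℝ) / (b - a)) * |x - nodes a b n i| < 1 := by linarith
  have h3 : (0 : ℝ) < (b - a) / n := by positivity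
  have h4 : |x - nodes a b n i| =
      (((n : ℝ) / (b - a)) * |x - nodes a b n i|) * ((b - a) / n) := by
    field_simp
  rw [h4]
  calc (((n : ℝ) / (b - a)) * |x - nodes a b n i|) * ((b - a) / n)
      < 1 * ((b - a) / n) := by exact mul_lt_mul_of_pos_right h2 h3
    _ = (b - a) / n := one_mul _

lemma half_le_hatA (hab : a < b) (hn : n ≠ 0) {i : ℕ} {x : ℝ}
    (h : |x - nodes a b n i| ≤ (b - a) / (2 * n)) : 1 / 2 ≤ hatA a b n i x := by
  have hn' : (0 : ℝ) < n := Nat.cast_pos.mpr (Nat.pos_of_ne_zero hn)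
  have hba : (0 : ℝ) < b - a := sub_pos.mpr hab
  have hc : (0 : ℝ) ≤ (n : ℝ) / (b - a) := by positivity
  have h1 : ((n : ℝ) / (b - a)) * |x - nodes a b n i| ≤
      ((n : ℝ) / (b - a)) * ((b - a) / (2 * n)) := mul_le_mul_of_nonneg_left h hc
  have h2 : ((n : ℝ) / (b - a)) * ((b - a) / (2 * n)) = 1 / 2 := by
    field_simp
  refine le_max_of_le_right ?_
  rw [h2] at h1
  linarith

lemma exists_interval (hab : a < b) (hn : n ≠ 0) {x : ℝ} (hx : x ∈ Icc a b) :
    ∃ k, k < n ∧ nodes a b n k ≤ x ∧ x ≤ nodes a b n (k + 1) := by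
  have hn' : (0 : ℝ) < n := Nat.cast_pos.mpr (Nat.pos_of_ne_zero hn)
  have hba : (0 : ℝ) < b - a := sub_pos.mpr hab
  set u : ℝ := (x - a) * n / (b - a) with hu
  have hu0 : 0 ≤ u := by
    exact div_nonneg (mul_nonneg (by linarith [hx.1]) hn'.le) hba.le
  have hun : u ≤ n := by
    rw [hu, div_le_iff₀ hba]
    nlinarith [hx.2]
  refine ⟨min (n - 1) ⌊u⌋₊, by omega, ?_, ?_⟩
  · have hk : ((min (n - 1) ⌊u⌋₊ : ℕ) : ℝ) ≤ u := by
      have h1 : (min (n - 1) ⌊u⌋₊ : ℕ) ≤ ⌊u⌋₊ := min_le_right _ _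
      calc ((min (n - 1) ⌊u⌋₊ : ℕ) : ℝ) ≤ (⌊u⌋₊ : ℝ) := by exact_mod_cast h1
        _ ≤ u := Nat.floor_le hu0
    unfold nodes
    rw [← sub_nonneg]
    have : x - (a + ((min (n - 1) ⌊u⌋₊ : ℕ) : ℝ) * (b - a) / n) =
        (u - ((min (n - 1) ⌊u⌋₊ : ℕ) : ℝ)) * ((b - a) / n) := by
      rw [hu]; field_simp; ring
    rw [this]
    exact mul_nonneg (by linarith) (by positivity)
  · have hk : u ≤ ((min (n - 1) ⌊u⌋₊ : ℕ) : ℝ) + 1 := by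
      rcases le_or_gt ⌊u⌋₊ (n - 1) with hcase | hcase
      · rw [min_eq_right hcase]
        exact (Nat.lt_floor_add_one u).le
      · rw [min_eq_left hcase.le]
        have : ((n - 1 : ℕ) : ℝ) + 1 = (n : ℝ) := by
          have : 1 ≤ n := Nat.pos_of_ne_zero hn
          push_cast [Nat.cast_sub this]
          ring
        rw [this]; exact hun
    unfold nodes
    rw [← sub_nonneg]
    have : a + (((min (n - 1) ⌊u⌋₊ + 1 : ℕ)) : ℝ) * (b - a) / n - x =
        (((min (n - 1) ⌊u⌋₊ : ℕ) : ℝ) + 1 - u) * ((b - a) / n) := by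
      rw [hu]; push_cast; field_simp; ring
    rw [this]
    exact mul_nonneg (by linarith) (by positivity)

end HatA

section HatB

variable {n : ℕ} {y : ℕ → ℝ}

lemma ymono (hs : ∀ p q, p < q → q ≤ n → y p < y q) {p q : ℕ} (hpq : p ≤ q) (hq : q ≤ n) :
    y p ≤ y q := by
  rcases eq_or_lt_of_le hpq with rfl | h
  · exact le_refl _
  · exact (hs p q h hq).le

lemma hatB_nonneg (hs : ∀ p q, p < q → q ≤ n → y p < y q) {i : ℕ} (hi : i ≤ n) (t : ℝ) :
    0 ≤ hatB n y i t := by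
  unfold hatB
  split_ifs with h1 h2
  · obtain ⟨h0, hl, hr⟩ := h1
    have hd : y (i - 1) < y i := hs (i - 1) i (by omega) hi
    exact div_nonneg (by linarith) (by linarith)
  · obtain ⟨hne, hl, hr⟩ := h2
    have hd : y i < y (i + 1) := hs i (i + 1) (by omega) (by omega)
    exact div_nonneg (by linarith) (by linarith)
  · exact le_refl _

lemma hatB_support (hs : ∀ p q, p < q → q ≤ n → y p < y q) {i : ℕ} (hi : i ≤ n) {t : ℝ}
    (h : 0 < hatB n y i t) : y (i - 1) ≤ t ∧ t ≤ y (min (i + 1) n) := by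
  unfold hatB at h
  split_ifs at h with h1 h2
  · obtain ⟨h0, hl, hr⟩ := h1
    exact ⟨hl, hr.trans (ymono hs (by omega) (by omega))⟩
  · obtain ⟨hne, hl, hr⟩ := h2
    refine ⟨(ymono hs (by omega) hi).trans hl, ?_⟩
    rwa [min_eq_left (by omega)]
  · exact absurd h (lt_irrefl 0)

lemma hatB_pos_rise (hs : ∀ p q, p < q → q ≤ n → y p < y q) {i : ℕ} (h0 : i ≠ 0) (hi : i ≤ n)
    {t : ℝ} (ht : t ∈ Ioo (y (i - 1)) (y i)) : 0 < hatB n y i t := by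
  unfold hatB
  rw [if_pos ⟨h0, ht.1.le, ht.2.le⟩]
  exact div_pos (by linarith [ht.1]) (by linarith [hs (i - 1) i (by omega) hi])

lemma hatB_pos_fall (hs : ∀ p q, p < q → q ≤ n → y p < y q) {i : ℕ} (hne : i ≠ n) (hi : i + 1 ≤ n)
    {t : ℝ} (ht : t ∈ Ioo (y i) (y (i + 1))) : 0 < hatB n y i t := by
  unfold hatB
  rw [if_neg, if_pos ⟨hne, ht.1.le, ht.2.le⟩]
  · exact div_pos (by linarith [ht.2]) (by linarith [hs i (i + 1) (by omega) hi])
  · rintro ⟨-, -, hr⟩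
    exact absurd hr (not_le.mpr ht.1)

lemma hatB_continuousOn (hs : ∀ p q, p < q → q ≤ n → y p < y q) (hn : n ≠ 0) {i : ℕ}
    (hi : i ≤ n) : ContinuousOn (hatB n y i) (Icc (y 0) (y n)) := by
  set r : ℝ → ℝ := fun t => if i = 0 then 1 else (t - y (i - 1)) / (y i - y (i - 1)) with hr
  set s : ℝ → ℝ := fun t => if i = n then 1 else (y (i + 1) - t) / (y (i + 1) - y i) with hsdef
  have hφ : Continuous fun t => max 0 (min (r t) (s t)) := by
    apply continuous_const.max
    apply Continuous.min
    · rw [hr]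
      split_ifs
      · exact continuous_const
      · exact (continuous_id.sub continuous_const).div_const _
    · rw [hsdef]
      split_ifs
      · exact continuous_const
      · exact (continuous_const.sub continuous_id).div_const _
  apply hφ.continuousOn.congr
  intro t ht
  obtain ⟨ht0, htn⟩ := ht
  show hatB n y i t = max 0 (min (r t) (s t))
  unfold hatB
  split_ifs with h1 h2
  · obtain ⟨h0, hl, hle⟩ := h1
    have g1 : y (i - 1) < y i := hs (i - 1) i (by omega) hi
    have hrv : r t = (t - y (i - 1)) / (y i - y (i - 1)) := by rw [hr]; simp [h0]
    have hr0 : 0 ≤ r t := by rw [hrv]; exact div_nonneg (by linarith) (by linarith)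
    have hr1 : r t ≤ 1 := by rw [hrv]; exact div_le_one_of_le₀ (by linarith) (by linarith)
    have hrs : r t ≤ s t := by
      rw [hsdef]
      by_cases hin : i = n
      · simpa [hin] using hr1
      · simp only [hin, if_false]
        have g2 : y i < y (i + 1) := hs i (i + 1) (by omega) (by omega)
        refine hr1.trans ?_
        rw [le_div_iff₀ (by linarith)]
        linarith
    rw [min_eq_left hrs, max_eq_right hr0, hrv]
  · obtain ⟨hne, hl, hle⟩ := h2
    have g2 : y i < y (i + 1) := hs i (i + 1) (by omega) (by omega)
    have hsv : s t = (y (i + 1) - t) / (y (i + 1) - y i) := by rw [hsdef]; simp [hne]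
    have hs0 : 0 ≤ s t := by rw [hsv]; exact div_nonneg (by linarith) (by linarith)
    have hs1 : s t ≤ 1 := by rw [hsv]; exact div_le_one_of_le₀ (by linarith) (by linarith)
    have hsr : s t ≤ r t := by
      rw [hr]
      by_cases hi0 : i = 0
      · simpa [hi0] using hs1
      · simp only [hi0, if_false]
        have g1 : y (i - 1) < y i := hs (i - 1) i (by omega) hi
        refine hs1.trans ?_
        rw [le_div_iff₀ (by linarith)]
        have : y (i - 1) ≤ y i := g1.le
        linarith
    rw [min_eq_right hsr, max_eq_right hs0, hsv]
  · symm
    rw [max_eq_left]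
    by_cases hi0 : i = 0
    · subst hi0
      have g2 : y 0 < y 1 := hs 0 1 (by omega) (by omega)
      have hsv : s t = (y 1 - t) / (y 1 - y 0) := by rw [hsdef]; simp [Ne.symm hn]
      have ht1 : y 1 < t := by
        by_contra hcon
        push_neg at hcon
        exact h2 ⟨Ne.symm hn, ht0, hcon⟩
      refine (min_le_right _ _).trans ?_
      rw [hsv]
      exact div_nonpos_of_nonpos_of_nonneg (by linarith) (by linarith)
    · have g1 : y (i - 1) < y i := hs (i - 1) i (by omega) hi
      have hrv : r t = (t - y (i - 1)) / (y i - y (i - 1)) := by rw [hr]; simp [hi0]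
      rcases not_and_or.mp h1 with hbad | hcase
      · exact absurd hi0 (not_not.mpr (not_ne_iff.mp hbad))
      rcases not_and_or.mp hcase with hlt | hgt
      · push_neg at hlt
        refine (min_le_left _ _).trans ?_
        rw [hrv]
        exact div_nonpos_of_nonpos_of_nonneg (by linarith) (by linarith)
      · push_neg at hgt
        have hin : i ≠ n := by
          rintro rfl
          exact absurd htn (not_le.mpr hgt)
        have g2 : y i < y (i + 1) := hs i (i + 1) (by omega) (by omega)
        have hsv : s t = (y (i + 1) - t) / (y (i + 1) - y i) := by rw [hsdef]; simp [hin]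
        have ht1 : y (i + 1) < t := by
          by_contra hcon
          push_neg at hcon
          exact h2 ⟨hin, hgt.le, hcon⟩
        refine (min_le_right _ _).trans ?_
        rw [hsv]
        exact div_nonpos_of_nonpos_of_nonneg (by linarith) (by linarith)

end HatB

section RfunSec

variable {a b : ℝ} {n : ℕ} {y : ℕ → ℝ}

lemma continuousOn_finset_sup' {ι : Type*} {F : ι → ℝ → ℝ} {S : Set ℝ} :
    ∀ {s : Finset ι} (hne : s.Nonempty), (∀ i ∈ s, ContinuousOn (F i) S) →
    ContinuousOn (fun t => s.sup' hne fun i => F i t) S := by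
  intro s
  induction s using Finset.cons_induction with
  | empty => intro hne; exact absurd hne (by simp)
  | cons i s hi ih =>
    intro hne h
    rcases s.eq_empty_or_nonempty with rfl | hs
    · have he : ∀ t, (Finset.cons i ∅ hi).sup' hne (fun j => F j t) = F i t := fun t => by simp
      exact ContinuousOn.congr (h i (Finset.mem_cons_self _ _)) (fun t _ => he t)
    · have he : ∀ t, (Finset.cons i s hi).sup' hne (fun j => F j t)
          = F i t ⊔ s.sup' hs (fun j => F j t) := fun t => Finset.sup'_cons hs (fun j => F j t)
      exact ContinuousOn.congr
        ((h i (Finset.mem_cons_self _ _)).sup (ih hs fun j hj => h j (Finset.mem_cons_of_mem hj)))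
        (fun t _ => he t)

lemma le_Rfun {i : ℕ} (hi : i < n + 1) (x t : ℝ) :
    hatA a b n i x * hatB n y i t ≤ Rfun a b n y x t := by
  unfold Rfun
  exact Finset.le_sup' (fun i => hatA a b n i x * hatB n y i t) (Finset.mem_range.mpr hi)

lemma Rfun_nonneg (hs : ∀ p q, p < q → q ≤ n → y p < y q) (x t : ℝ) :
    0 ≤ Rfun a b n y x t := by
  refine le_trans ?_ (le_Rfun (Nat.succ_pos n) x t)
  exact mul_nonneg (hatA_nonneg a b n 0 x) (hatB_nonneg hs (Nat.zero_le n) t)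

lemma Rfun_pos_elim {x t : ℝ} (h : 0 < Rfun a b n y x t) :
    ∃ i, i ≤ n ∧ 0 < hatA a b n i x * hatB n y i t := by
  unfold Rfun at h
  obtain ⟨i, hi, hpos⟩ := Finset.lt_sup'_iff _ |>.mp h
  exact ⟨i, Nat.lt_succ_iff.mp (Finset.mem_range.mp hi), hpos⟩

lemma Rfun_continuousOn (hs : ∀ p q, p < q → q ≤ n → y p < y q) (hn : n ≠ 0) (x : ℝ) :
    ContinuousOn (fun t => Rfun a b n y x t) (Icc (y 0) (y n)) := by
  unfold Rfun
  exact continuousOn_finset_sup' _ fun i hi =>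
    continuousOn_const.mul (hatB_continuousOn hs hn (Nat.lt_succ_iff.mp (Finset.mem_range.mp hi)))

end RfunSec

/-- For continuous strictly increasing `f` on `[a, b]` and `n ≥ 1`, the
conditional expectation `E_n(x) = (∫_c^d t R_n(x,t) dt)/(∫_c^d R_n(x,t) dt)` satisfies
`|E_n(x) − f(x)| ≤ 3 max_{1 ≤ i ≤ n} (y_i − y_{i−1})` for every `x ∈ [a, b]`. -/
theorem stmt_4 (a b : ℝ) (hab : a < b) (f : ℝ → ℝ)
    (hf : ContinuousOn f (Set.Icc a b)) (hmono : StrictMonoOn f (Set.Icc a b))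
    (n : ℕ) (hn : 1 ≤ n) :
    ∀ x ∈ Set.Icc a b,
      |(∫ t in f a..f b, t * Rfun a b n (fun i => f (nodes a b n i)) x t) /
          (∫ t in f a..f b, Rfun a b n (fun i => f (nodes a b n i)) x t) - f x| ≤
        3 * (Finset.range n).sup'
            (Finset.nonempty_range_iff.mpr (Nat.one_le_iff_ne_zero.mp hn))
            (fun i => f (nodes a b n (i + 1)) - f (nodes a b n i)) := by
  intro x hx
  have hn0 : n ≠ 0 := Nat.one_le_iff_ne_zero.mp hn
  set y : ℕ → ℝ := fun i => f (nodes a b n i) with hy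
  have hs : ∀ p q, p < q → q ≤ n → y p < y q := fun p q h hq =>
    hmono (nodes_mem hab hn0 (le_of_lt (lt_of_lt_of_le h hq))) (nodes_mem hab hn0 hq)
      (nodes_strictMono hab hn0 h)
  have fmono : MonotoneOn f (Set.Icc a b) := hmono.monotoneOn
  have ha : a ∈ Set.Icc a b := ⟨le_refl a, hab.le⟩
  have hb : b ∈ Set.Icc a b := ⟨hab.le, le_refl b⟩
  have hc : y 0 = f a := by rw [hy]; simp [nodes_zero]
  have hd : y n = f b := by rw [hy]; simp [nodes_last hn0]
  have hcd : f a < f b := hmono ha hb hab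
  have hclow : f a ≤ f x := fmono ha hx hx.1
  have hfhigh : f x ≤ f b := fmono hx hb hx.2
  set M := (Finset.range n).sup'
      (Finset.nonempty_range_iff.mpr (Nat.one_le_iff_ne_zero.mp hn))
      (fun i => f (nodes a b n (i + 1)) - f (nodes a b n i)) with hMdef
  have gap_le : ∀ i, i < n → y (i + 1) - y i ≤ M := by
    intro i hi
    rw [hMdef]
    simp only [hy]
    exact Finset.le_sup' (fun i => f (nodes a b n (i + 1)) - f (nodes a b n i))
      (Finset.mem_range.mpr hi)
  have hMpos : 0 < M :=
    lt_of_lt_of_le (sub_pos.mpr (hs 0 1 one_pos hn)) (gap_le 0 (Nat.pos_of_ne_zero hn0))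
  have ydiff : ∀ q, q ≤ n → ∀ p, p ≤ q → y q - y p ≤ ((q - p : ℕ) : ℝ) * M := by
    intro q
    induction q with
    | zero =>
      intro _ p hp
      have : p = 0 := Nat.le_zero.mp hp
      subst this; simp
    | succ q ih =>
      intro hq p hp
      rcases Nat.lt_or_ge p (q + 1) with h | h
      · have h1 := ih (by omega) p (by omega)
        have h2 : y (q + 1) - y q ≤ M := gap_le q (by omega)
        have h3 : ((q + 1 - p : ℕ) : ℝ) = ((q - p : ℕ) : ℝ) + 1 := by
          have : q + 1 - p = (q - p) + 1 := by omega
          rw [this]; push_cast; ring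
        rw [h3]
        linarith
      · have : p = q + 1 := by omega
        subst this; simp
  have hgnonneg : ∀ t, 0 ≤ Rfun a b n y x t := fun t => Rfun_nonneg hs x t
  have hgcont : ContinuousOn (fun t => Rfun a b n y x t) (Set.Icc (f a) (f b)) := by
    have := Rfun_continuousOn (a := a) (b := b) hs hn0 x
    rwa [hc, hd] at this
  have hint_g : IntervalIntegrable (fun t => Rfun a b n y x t) MeasureTheory.volume (f a) (f b) := by
    apply ContinuousOn.intervalIntegrable
    rwa [Set.uIcc_of_le hcd.le]
  have hint_tg : IntervalIntegrable (fun t => t * Rfun a b n y x t)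
      MeasureTheory.volume (f a) (f b) := by
    apply ContinuousOn.intervalIntegrable
    rw [Set.uIcc_of_le hcd.le]
    exact continuousOn_id.mul hgcont
  have hint_sub : IntervalIntegrable (fun t => (t - f x) * Rfun a b n y x t)
      MeasureTheory.volume (f a) (f b) := by
    apply ContinuousOn.intervalIntegrable
    rw [Set.uIcc_of_le hcd.le]
    exact (continuousOn_id.sub continuousOn_const).mul hgcont
  -- pointwise bound
  have hptw : ∀ t, |t - f x| * Rfun a b n y x t ≤ (2 * M) * Rfun a b n y x t := by
    intro t
    rcases eq_or_lt_of_le (hgnonneg t) with h0 | hpos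
    · rw [← h0]; simp
    · obtain ⟨i, hi, hprod⟩ := Rfun_pos_elim hpos
      have hA : 0 < hatA a b n i x := by
        by_contra hcon
        push_neg at hcon
        have h0' : hatA a b n i x = 0 := le_antisymm hcon (hatA_nonneg a b n i x)
        rw [h0', zero_mul] at hprod
        exact lt_irrefl 0 hprod
      have hB : 0 < hatB n y i t := by
        by_contra hcon
        push_neg at hcon
        have h0' : hatB n y i t = 0 := le_antisymm hcon (hatB_nonneg hs hi t)
        rw [h0', mul_zero] at hprod
        exact lt_irrefl 0 hprod
      obtain ⟨htl, htr⟩ := hatB_support hs hi hB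
      have hdist := abs_lt.mp (abs_lt_of_hatA_pos hab hn0 hA)
      have hfl : y (i - 1) ≤ f x := by
        rcases Nat.eq_zero_or_pos i with rfl | hipos
        · rw [show (0 : ℕ) - 1 = 0 from rfl, hc]; exact hclow
        · have hnd : nodes a b n i - nodes a b n (i - 1) = (b - a) / n := by
            have := nodes_sub hab hn0 (i - 1)
            rwa [Nat.sub_add_cancel hipos] at this
          have hxgt : nodes a b n (i - 1) ≤ x := by linarith [hdist.1]
          have := fmono (nodes_mem hab hn0 (by omega)) hx hxgt
          simpa [hy] using this
      have hfh : f x ≤ y (min (i + 1) n) := by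
        rcases eq_or_lt_of_le hi with rfl | hilt
        · rw [min_eq_right (by omega), hd]; exact hfhigh
        · rw [min_eq_left (by omega)]
          have hnd := nodes_sub hab hn0 i
          have hxlt : x ≤ nodes a b n (i + 1) := by linarith [hdist.2]
          have := fmono hx (nodes_mem hab hn0 (by omega)) hxlt
          simpa [hy] using this
      have hwidth : y (min (i + 1) n) - y (i - 1) ≤ 2 * M := by
        have h1 := ydiff (min (i + 1) n) (by omega) (i - 1) (by omega)
        have h2 : ((min (i + 1) n - (i - 1) : ℕ) : ℝ) ≤ 2 := by
          have h3 : min (i + 1) n - (i - 1) ≤ 2 := by omega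
          calc ((min (i + 1) n - (i - 1) : ℕ) : ℝ) ≤ ((2 : ℕ) : ℝ) := Nat.cast_le.mpr h3
            _ = 2 := by norm_num
        nlinarith
      have habs : |t - f x| ≤ 2 * M := by
        rw [abs_le]
        constructor <;> linarith
      exact mul_le_mul_of_nonneg_right habs (hgnonneg t)
  -- positivity of the denominator
  have claim : ∀ j, j ≤ n → 1 / 2 ≤ hatA a b n j x →
      0 < ∫ t in (f a)..(f b), Rfun a b n y x t := by
    intro j hj hAj
    obtain ⟨p, q, hpq, hcp, hqd, hposOn⟩ :
        ∃ p q : ℝ, p < q ∧ f a ≤ p ∧ q ≤ f b ∧ ∀ t ∈ Set.Ioo p q, 0 < Rfun a b n y x t := by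
      rcases Nat.eq_zero_or_pos j with rfl | hjpos
      · refine ⟨y 0, y 1, hs 0 1 one_pos hn, le_of_eq hc.symm,
          by rw [← hd]; exact ymono hs hn (le_refl n), ?_⟩
        intro t ht
        have hBt := hatB_pos_fall hs (by omega) hn ht
        calc (0 : ℝ) < hatA a b n 0 x * hatB n y 0 t :=
              mul_pos (lt_of_lt_of_le one_half_pos hAj) hBt
          _ ≤ Rfun a b n y x t := le_Rfun (by omega) x t
      · refine ⟨y (j - 1), y j, hs (j - 1) j (by omega) hj,
          by rw [← hc]; exact ymono hs (Nat.zero_le _) (by omega),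
          by rw [← hd]; exact ymono hs hj (le_refl n), ?_⟩
        intro t ht
        have hBt := hatB_pos_rise hs (by omega) hj ht
        calc (0 : ℝ) < hatA a b n j x * hatB n y j t :=
              mul_pos (lt_of_lt_of_le one_half_pos hAj) hBt
          _ ≤ Rfun a b n y x t := le_Rfun (by omega) x t
    have hint1 : IntervalIntegrable (fun t => Rfun a b n y x t) MeasureTheory.volume (f a) p :=
      hint_g.mono_set (by
        rw [Set.uIcc_of_le hcp, Set.uIcc_of_le hcd.le]
        exact Set.Icc_subset_Icc (le_refl _) (hpq.le.trans hqd))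
    have hint2 : IntervalIntegrable (fun t => Rfun a b n y x t) MeasureTheory.volume p q :=
      hint_g.mono_set (by
        rw [Set.uIcc_of_le hpq.le, Set.uIcc_of_le hcd.le]
        exact Set.Icc_subset_Icc hcp hqd)
    have hint3 : IntervalIntegrable (fun t => Rfun a b n y x t) MeasureTheory.volume q (f b) :=
      hint_g.mono_set (by
        rw [Set.uIcc_of_le hqd, Set.uIcc_of_le hcd.le]
        exact Set.Icc_subset_Icc (hcp.trans hpq.le) (le_refl _))
    have hmid : 0 < ∫ t in p..q, Rfun a b n y x t :=
      intervalIntegral.intervalIntegral_pos_of_pos_on hint2 hposOn hpq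
    have h1 : 0 ≤ ∫ t in (f a)..p, Rfun a b n y x t :=
      intervalIntegral.integral_nonneg hcp fun u _ => hgnonneg u
    have h3 : 0 ≤ ∫ t in q..(f b), Rfun a b n y x t :=
      intervalIntegral.integral_nonneg hqd fun u _ => hgnonneg u
    have e1 := intervalIntegral.integral_add_adjacent_intervals hint1 hint2
    have e2 := intervalIntegral.integral_add_adjacent_intervals (hint1.trans hint2) hint3
    linarith
  obtain ⟨k, hk, hk1, hk2⟩ := exists_interval hab hn0 hx
  have hstep := nodes_sub hab hn0 k
  have h2n : (b - a) / (n : ℝ) = 2 * ((b - a) / (2 * n)) := by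
    have hnne : (n : ℝ) ≠ 0 := Nat.cast_ne_zero.mpr hn0
    field_simp
  have hI0pos : 0 < ∫ t in (f a)..(f b), Rfun a b n y x t := by
    have hhalfpos : (0 : ℝ) < (b - a) / (2 * n) := by
      have hn' : (0 : ℝ) < n := Nat.cast_pos.mpr (Nat.pos_of_ne_zero hn0)
      have hba : (0 : ℝ) < b - a := sub_pos.mpr hab
      positivity
    rcases le_or_gt x (nodes a b n k + (b - a) / (2 * n)) with hhalf | hhalf
    · refine claim k (by omega) (half_le_hatA hab hn0 ?_)
      rw [abs_le]
      constructor <;> linarith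
    · refine claim (k + 1) (by omega) (half_le_hatA hab hn0 ?_)
      rw [abs_le]
      constructor <;> linarith
  set I0 := ∫ t in (f a)..(f b), Rfun a b n y x t with hI0
  set I1 := ∫ t in (f a)..(f b), t * Rfun a b n y x t with hI1
  have hsubint : (∫ t in (f a)..(f b), (t - f x) * Rfun a b n y x t) = I1 - f x * I0 := by
    simp only [sub_mul]
    rw [intervalIntegral.integral_sub hint_tg (hint_g.const_mul (f x)),
      intervalIntegral.integral_const_mul]
  have hbound : |I1 - f x * I0| ≤ 2 * M * I0 := by
    rw [← hsubint]
    refine (intervalIntegral.abs_integral_le_integral_abs hcd.le).trans ?_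
    have hconst : (∫ t in (f a)..(f b), (2 * M) * Rfun a b n y x t) = 2 * M * I0 :=
      intervalIntegral.integral_const_mul _ _
    rw [← hconst]
    refine intervalIntegral.integral_mono_on hcd.le hint_sub.abs (hint_g.const_mul _) ?_
    intro t _
    rw [abs_mul, abs_of_nonneg (hgnonneg t)]
    exact hptw t
  have hfrac : I1 / I0 - f x = (I1 - f x * I0) / I0 := by
    field_simp
  rw [hfrac, abs_div, abs_of_pos hI0pos, div_le_iff₀ hI0pos]
  calc |I1 - f x * I0| ≤ 2 * M * I0 := hbound
    _ ≤ 3 * M * I0 := by nlinarith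
end

section
/- Let f : [0, 1] → ℝ be continuous and strictly increasing, with c = f(0) and d = f(1). For n ≥ 1 let m = 2n, x_i = i/m, y_i = f(x_i) (i = 0, …, m). Define A_i : [0, 1] → ℝ by: A_i(x) = sin²(nπx) if i is odd and x ∈ [(i−1)/m, (i+1)/m], A_i(x) = cos²(nπx) if i is even and x ∈ [max(0, (i−1)/m), min(1, (i+1)/m)], and A_i(x) = 0 otherwise. Define B_i : [c, d] → ℝ by: B_0(y) = cos²(π(y − y_0)/(2(y_1 − y_0))) for y ∈ [y_0, y_1] and 0 otherwise; for 1 ≤ i ≤ m−1, B_i(y) = sin²(π(y − y_{i−1})/(2(y_i − y_{i−1}))) for y ∈ [y_{i−1}, y_i], B_i(y) = cos²(π(y − y_i)/(2(y_{i+1} − y_i))) for y ∈ (y_i, y_{i+1}], and 0 otherwise; B_m(y) = sin²(π(y − y_{m−1})/(2(y_m − y_{m−1}))) for y ∈ [y_{m−1}, y_m] and 0 otherwise. Set μ_n(x, y) = max_{0≤i≤m} A_i(x)·B_i(y) and f_n(x) = (∫_c^d y·μ_n(x, y) dy)/(∫_c^d μ_n(x, y) dy). Then (f_n) converges uniformly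 to f on [0, 1]: for every ε > 0 there exists N such that for all n > N and all x ∈ [0, 1], |f_n(x) − f(x)| < ε. -/
open scoped Classical

/-- The base function `A_i` on `[0, 1]` built from the essence probability densities of the
Adam and Eve wave functions at quantum number `n` (with `m = 2n`): `A_i(x) = sin²(nπx)` for
odd `i` on `[(i−1)/m, (i+1)/m]`, `A_i(x) = cos²(nπx)` for even `i` on
`[max 0 ((i−1)/m), min 1 ((i+1)/m)]`, and `0` otherwise. -/
noncomputable def qA (n i : ℕ) (x : ℝ) : ℝ :=
  if i % 2 = 1 then
    if ((i : ℝ) - 1) / (2 * (n : ℝ)) ≤ x ∧ x ≤ ((i : ℝ) + 1) / (2 * (n : ℝ)) then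
      Real.sin ((n : ℝ) * Real.pi * x) ^ 2
    else 0
  else
    if max 0 (((i : ℝ) - 1) / (2 * (n : ℝ))) ≤ x ∧
        x ≤ min 1 (((i : ℝ) + 1) / (2 * (n : ℝ))) then
      Real.cos ((n : ℝ) * Real.pi * x) ^ 2
    else 0

/-- The base function `B_i` on `[c, d]` built from the ground-state probability essence
wave functions of the descendant particles over the subintervals `[y (i−1), y i]`
(with `m = 2n`): `B_0` is the falling `cos²` piece on `[y 0, y 1]`, `B_m` is the rising
`sin²` piece on `[y (m−1), y m]`, and for `1 ≤ i ≤ m−1`, `B_i` rises as `sin²` on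
`[y (i−1), y i]` and falls as `cos²` on `(y i, y (i+1)]`, being `0` otherwise. -/
noncomputable def qB (n : ℕ) (y : ℕ → ℝ) (i : ℕ) (t : ℝ) : ℝ :=
  if i = 0 then
    if y 0 ≤ t ∧ t ≤ y 1 then
      Real.cos (Real.pi * (t - y 0) / (2 * (y 1 - y 0))) ^ 2
    else 0
  else if i = 2 * n then
    if y (2 * n - 1) ≤ t ∧ t ≤ y (2 * n) then
      Real.sin (Real.pi * (t - y (2 * n - 1)) / (2 * (y (2 * n) - y (2 * n - 1)))) ^ 2
    else 0
  else
    if y (i - 1) ≤ t ∧ t ≤ y i then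
      Real.sin (Real.pi * (t - y (i - 1)) / (2 * (y i - y (i - 1)))) ^ 2
    else if y i < t ∧ t ≤ y (i + 1) then
      Real.cos (Real.pi * (t - y i) / (2 * (y (i + 1) - y i))) ^ 2
    else 0

/-- The joint function `μ_n(x, t) = max_{0 ≤ i ≤ 2n} A_i(x) B_i(t)`. -/
noncomputable def mufun (n : ℕ) (y : ℕ → ℝ) (x t : ℝ) : ℝ :=
  (Finset.range (2 * n + 1)).sup' Finset.nonempty_range_add_one
    (fun i => qA n i x * qB n y i t)

namespace S16

open Real MeasureTheory intervalIntegral Set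

lemma qA_nonneg (n i : ℕ) (x : ℝ) : 0 ≤ qA n i x := by
  unfold qA; split_ifs <;> positivity

lemma qA_le_one (n i : ℕ) (x : ℝ) : qA n i x ≤ 1 := by
  unfold qA; split_ifs
  · exact Real.sin_sq_le_one _
  · norm_num
  · exact Real.cos_sq_le_one _
  · norm_num

lemma qB_nonneg (n : ℕ) (y : ℕ → ℝ) (i : ℕ) (t : ℝ) : 0 ≤ qB n y i t := by
  unfold qB; split_ifs <;> positivity

lemma qB_le_one (n : ℕ) (y : ℕ → ℝ) (i : ℕ) (t : ℝ) : qB n y i t ≤ 1 := by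
  unfold qB; split_ifs
  · exact Real.cos_sq_le_one _
  · norm_num
  · exact Real.sin_sq_le_one _
  · norm_num
  · exact Real.sin_sq_le_one _
  · exact Real.cos_sq_le_one _
  · norm_num

lemma measurable_qB (n : ℕ) (y : ℕ → ℝ) (i : ℕ) : Measurable (qB n y i) := by
  unfold qB
  rcases eq_or_ne i 0 with h0 | h0
  · simp only [h0, if_pos rfl]
    exact Measurable.ite (p := fun t => y 0 ≤ t ∧ t ≤ y 1)
      (show MeasurableSet (Set.Icc (y 0) (y 1)) from measurableSet_Icc)
      (by fun_prop) measurable_const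
  · simp only [if_neg h0]
    rcases eq_or_ne i (2 * n) with hM | hM
    · simp only [hM, if_pos rfl]
      exact Measurable.ite (p := fun t => y (2*n-1) ≤ t ∧ t ≤ y (2*n))
        (show MeasurableSet (Set.Icc (y (2*n-1)) (y (2*n))) from measurableSet_Icc)
        (by fun_prop) measurable_const
    · simp only [if_neg hM]
      refine Measurable.ite (p := fun t => y (i-1) ≤ t ∧ t ≤ y i)
        (show MeasurableSet (Set.Icc (y (i-1)) (y i)) from measurableSet_Icc)
        (by fun_prop) ?_
      exact Measurable.ite (p := fun t => y i < t ∧ t ≤ y (i+1))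
        (show MeasurableSet (Set.Ioc (y i) (y (i+1))) from measurableSet_Ioc)
        (by fun_prop) measurable_const

lemma measurable_mu (n : ℕ) (y : ℕ → ℝ) (x : ℝ) : Measurable (fun t => mufun n y x t) := by
  have h : (fun t => mufun n y x t)
      = (Finset.range (2*n+1)).sup' Finset.nonempty_range_add_one
          (fun i t => qA n i x * qB n y i t) := by
    ext t
    rw [mufun, Finset.sup'_apply]
  rw [h]
  exact Finset.measurable_sup' _ (fun i _ => measurable_const.mul (measurable_qB n y i))

lemma mu_nonneg (n : ℕ) (y : ℕ → ℝ) (x t : ℝ) : 0 ≤ mufun n y x t := by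
  have h0 : (0:ℕ) ∈ Finset.range (2*n+1) := Finset.mem_range.mpr (Nat.succ_pos _)
  rw [mufun]
  exact le_trans (mul_nonneg (qA_nonneg n 0 x) (qB_nonneg n y 0 t)) (Finset.le_sup' (fun i => qA n i x * qB n y i t) h0)

lemma mu_le_one (n : ℕ) (y : ℕ → ℝ) (x t : ℝ) : mufun n y x t ≤ 1 := by
  rw [mufun]
  exact Finset.sup'_le _ _ fun i _ => by
    nlinarith [qA_nonneg n i x, qA_le_one n i x, qB_nonneg n y i t, qB_le_one n y i t]

lemma intInt_of_bdd {g : ℝ → ℝ} (hg : Measurable g) {a b C : ℝ}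
    (hC : ∀ t ∈ Set.uIcc a b, |g t| ≤ C) : IntervalIntegrable g volume a b := by
  refine (_root_.intervalIntegrable_const (c := C)).mono_fun' hg.aestronglyMeasurable ?_
  refine (MeasureTheory.ae_restrict_mem measurableSet_uIoc).mono fun t ht => ?_
  simpa [Real.norm_eq_abs] using hC t (Set.uIoc_subset_uIcc ht)

lemma sin_piece_pos {p q t : ℝ} (h1 : p < t) (h2 : t < q) :
    0 < Real.sin (Real.pi * (t - p) / (2 * (q - p))) ^ 2 := by
  have hL : 0 < q - p := by linarith
  have ha1 : 0 < Real.pi * (t - p) / (2 * (q - p)) :=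
    div_pos (mul_pos Real.pi_pos (by linarith)) (by linarith)
  have ha2 : Real.pi * (t - p) / (2 * (q - p)) < Real.pi / 2 := by
    rw [div_lt_div_iff₀ (by linarith) (by norm_num)]
    nlinarith [Real.pi_pos]
  exact pow_pos (Real.sin_pos_of_pos_of_lt_pi ha1 (by linarith [Real.pi_pos])) 2

lemma cos_piece_pos {p q t : ℝ} (h1 : p ≤ t) (h2 : t < q) :
    0 < Real.cos (Real.pi * (t - p) / (2 * (q - p))) ^ 2 := by
  have hL : 0 < q - p := by linarith
  have ha1 : 0 ≤ Real.pi * (t - p) / (2 * (q - p)) :=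
    div_nonneg (mul_nonneg Real.pi_pos.le (by linarith)) (by linarith)
  have ha2 : Real.pi * (t - p) / (2 * (q - p)) < Real.pi / 2 := by
    rw [div_lt_div_iff₀ (by linarith) (by norm_num)]
    nlinarith [Real.pi_pos]
  exact pow_pos (Real.cos_pos_of_mem_Ioo
    ⟨by nlinarith [Real.pi_pos], ha2⟩) 2

lemma sin_zero_of_even (n j : ℕ) (hn : n ≠ 0) (hj : j % 2 = 0) :
    Real.sin ((n:ℝ) * Real.pi * ((j:ℝ) / (2 * (n:ℝ)))) = 0 := by
  obtain ⟨l, hl⟩ : ∃ l, j = 2 * l := ⟨j / 2, by omega⟩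
  have hn' : (n:ℝ) ≠ 0 := Nat.cast_ne_zero.mpr hn
  have harg : (n:ℝ) * Real.pi * ((j:ℝ) / (2 * (n:ℝ))) = (l:ℝ) * Real.pi := by
    subst hl; push_cast; field_simp
  rw [harg, Real.sin_nat_mul_pi]

lemma cos_zero_of_odd (n j : ℕ) (hn : n ≠ 0) (hj : j % 2 = 1) :
    Real.cos ((n:ℝ) * Real.pi * ((j:ℝ) / (2 * (n:ℝ)))) = 0 := by
  obtain ⟨l, hl⟩ : ∃ l, j = 2 * l + 1 := ⟨j / 2, by omega⟩
  have hn' : (n:ℝ) ≠ 0 := Nat.cast_ne_zero.mpr hn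
  have harg : (n:ℝ) * Real.pi * ((j:ℝ) / (2 * (n:ℝ))) = (l:ℝ) * Real.pi + Real.pi / 2 := by
    subst hl; push_cast; field_simp
  rw [harg, Real.cos_add_pi_div_two, Real.sin_nat_mul_pi, neg_zero]

lemma le_mu (n : ℕ) (y : ℕ → ℝ) (x t : ℝ) {i : ℕ} (hi : i ≤ 2*n) :
    qA n i x * qB n y i t ≤ mufun n y x t := by
  rw [mufun]
  exact Finset.le_sup' (fun i => qA n i x * qB n y i t) (Finset.mem_range.mpr (by omega))

lemma mu_ne_zero (n : ℕ) (y : ℕ → ℝ) (x t : ℝ) (h : mufun n y x t ≠ 0) :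
    ∃ i ≤ 2*n, qA n i x * qB n y i t ≠ 0 := by
  obtain ⟨j, hj, hje⟩ := Finset.exists_mem_eq_sup' (Finset.nonempty_range_add_one (n := 2*n))
    (fun i => qA n i x * qB n y i t)
  refine ⟨j, by simpa using Nat.lt_succ_iff.mp (Finset.mem_range.mp hj), ?_⟩
  rw [mufun] at h
  rw [← hje]
  exact h

lemma integrable_of_01 {g : ℝ → ℝ} (hg : Measurable g) (h0 : ∀ t, 0 ≤ g t)
    (h1 : ∀ t, g t ≤ 1) (a b : ℝ) : IntervalIntegrable g volume a b :=
  intInt_of_bdd hg (C := 1) (fun t _ => abs_le.mpr ⟨by linarith [h0 t], h1 t⟩)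

lemma integral_pos_of_sub {g : ℝ → ℝ} (hmeas : Measurable g) (h0 : ∀ t, 0 ≤ g t)
    (h1 : ∀ t, g t ≤ 1) {c d p q : ℝ} (hcp : c ≤ p) (hpq : p < q) (hqd : q ≤ d)
    (hpos : ∀ t ∈ Set.Ioo p q, 0 < g t) : 0 < ∫ t in c..d, g t := by
  have hint : ∀ a b : ℝ, IntervalIntegrable g volume a b := integrable_of_01 hmeas h0 h1
  have h2 : 0 < ∫ t in p..q, g t := intervalIntegral_pos_of_pos_on (hint p q) hpos hpq
  have e1 : (∫ t in c..p, g t) + ∫ t in p..d, g t = ∫ t in c..d, g t :=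
    integral_add_adjacent_intervals (hint c p) (hint p d)
  have e2 : (∫ t in p..q, g t) + ∫ t in q..d, g t = ∫ t in p..d, g t :=
    integral_add_adjacent_intervals (hint p q) (hint q d)
  have n1 : 0 ≤ ∫ t in c..p, g t := integral_nonneg hcp (fun u _ => h0 u)
  have n2 : 0 ≤ ∫ t in q..d, g t := integral_nonneg hqd (fun u _ => h0 u)
  linarith

lemma qA_eval_odd (n i : ℕ) (x : ℝ) (h : i % 2 = 1)
    (hc : ((i:ℝ) - 1) / (2 * (n:ℝ)) ≤ x ∧ x ≤ ((i:ℝ) + 1) / (2 * (n:ℝ))) :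
    qA n i x = Real.sin ((n:ℝ) * Real.pi * x) ^ 2 := by
  unfold qA; rw [if_pos h, if_pos hc]

lemma qA_eval_even (n i : ℕ) (x : ℝ) (h : i % 2 = 0) (hx0 : 0 ≤ x) (hx1 : x ≤ 1)
    (hc : ((i:ℝ) - 1) / (2 * (n:ℝ)) ≤ x ∧ x ≤ ((i:ℝ) + 1) / (2 * (n:ℝ))) :
    qA n i x = Real.cos ((n:ℝ) * Real.pi * x) ^ 2 := by
  unfold qA
  rw [if_neg (by omega), if_pos ⟨max_le hx0 hc.1, le_min hx1 hc.2⟩]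

lemma qA_cond (n i : ℕ) (x : ℝ) (h : qA n i x ≠ 0) :
    (((i:ℝ) - 1) / (2 * (n:ℝ)) ≤ x ∧ x ≤ ((i:ℝ) + 1) / (2 * (n:ℝ)))
      ∧ (i % 2 = 1 → Real.sin ((n:ℝ) * Real.pi * x) ≠ 0)
      ∧ (i % 2 = 0 → Real.cos ((n:ℝ) * Real.pi * x) ≠ 0) := by
  unfold qA at h
  by_cases hp : i % 2 = 1
  · rw [if_pos hp] at h
    by_cases hc : ((i:ℝ) - 1) / (2 * (n:ℝ)) ≤ x ∧ x ≤ ((i:ℝ) + 1) / (2 * (n:ℝ))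
    · rw [if_pos hc] at h
      exact ⟨hc, fun _ => fun hs => h (by rw [hs]; ring), fun h0 => absurd hp (by omega)⟩
    · rw [if_neg hc] at h; exact absurd rfl h
  · rw [if_neg hp] at h
    by_cases hc : max 0 (((i:ℝ) - 1) / (2 * (n:ℝ))) ≤ x ∧ x ≤ min 1 (((i:ℝ) + 1) / (2 * (n:ℝ)))
    · rw [if_pos hc] at h
      refine ⟨⟨le_trans (le_max_right _ _) hc.1, le_trans hc.2 (min_le_right _ _)⟩,
        fun h1 => absurd h1 hp, fun _ => fun hs => h (by rw [hs]; ring)⟩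
    · rw [if_neg hc] at h; exact absurd rfl h

lemma qB_supp (n : ℕ) (hn : 1 ≤ n) (y : ℕ → ℝ)
    (ymono : ∀ i j : ℕ, i ≤ j → j ≤ 2*n → y i ≤ y j)
    (i : ℕ) (hi : i ≤ 2*n) (t : ℝ) (ht : qB n y i t ≠ 0) :
    y (i-1) ≤ t ∧ t ≤ y (min (i+1) (2*n)) := by
  unfold qB at ht
  by_cases h0 : i = 0
  · subst h0
    rw [if_pos rfl] at ht
    by_cases hc : y 0 ≤ t ∧ t ≤ y 1
    · have hmin : min (0+1) (2*n) = 1 := by omega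
      rw [hmin]
      exact ⟨hc.1, hc.2⟩
    · rw [if_neg hc] at ht; exact absurd rfl ht
  · rw [if_neg h0] at ht
    by_cases hM : i = 2*n
    · subst hM
      rw [if_pos rfl] at ht
      by_cases hc : y (2*n-1) ≤ t ∧ t ≤ y (2*n)
      · have hmin : min (2*n+1) (2*n) = 2*n := by omega
        rw [hmin]
        exact ⟨hc.1, hc.2⟩
      · rw [if_neg hc] at ht; exact absurd rfl ht
    · rw [if_neg hM] at ht
      have hmin : min (i+1) (2*n) = i + 1 := by omega
      rw [hmin]
      by_cases hc1 : y (i-1) ≤ t ∧ t ≤ y i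
      · exact ⟨hc1.1, le_trans hc1.2 (ymono i (i+1) (by omega) (by omega))⟩
      · rw [if_neg hc1] at ht
        by_cases hc2 : y i < t ∧ t ≤ y (i+1)
        · exact ⟨le_trans (ymono (i-1) i (by omega) (by omega)) hc2.1.le, hc2.2⟩
        · rw [if_neg hc2] at ht; exact absurd rfl ht

lemma qB_integral_pos (n : ℕ) (hn : 1 ≤ n) (y : ℕ → ℝ)
    (ymono : ∀ i j : ℕ, i ≤ j → j ≤ 2*n → y i ≤ y j)
    (ystrict : ∀ i j : ℕ, i < j → j ≤ 2*n → y i < y j)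
    (i : ℕ) (hi : i ≤ 2*n) :
    0 < ∫ t in (y 0)..(y (2*n)), qB n y i t := by
  by_cases h0 : i = 0
  · subst h0
    refine integral_pos_of_sub (measurable_qB n y 0) (qB_nonneg n y 0) (qB_le_one n y 0)
      (le_refl (y 0)) (ystrict 0 1 (by omega) (by omega)) (ymono 1 (2*n) (by omega) (le_refl _))
      (fun t htt => ?_)
    unfold qB
    rw [if_pos rfl, if_pos ⟨htt.1.le, htt.2.le⟩]
    exact cos_piece_pos htt.1.le htt.2
  · by_cases hM : i = 2*n
    · subst hM
      refine integral_pos_of_sub (measurable_qB n y (2*n)) (qB_nonneg n y (2*n))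
        (qB_le_one n y (2*n)) (ymono 0 (2*n-1) (by omega) (by omega))
        (ystrict (2*n-1) (2*n) (by omega) (le_refl _)) (le_refl (y (2*n)))
        (fun t htt => ?_)
      unfold qB
      rw [if_neg (by omega), if_pos rfl, if_pos ⟨htt.1.le, htt.2.le⟩]
      exact sin_piece_pos htt.1 htt.2
    · refine integral_pos_of_sub (measurable_qB n y i) (qB_nonneg n y i) (qB_le_one n y i)
        (ymono 0 (i-1) (by omega) (by omega)) (ystrict (i-1) i (by omega) hi)
        (ymono i (2*n) hi (le_refl _)) (fun t htt => ?_)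
      unfold qB
      rw [if_neg h0, if_neg hM, if_pos ⟨htt.1.le, htt.2.le⟩]
      exact sin_piece_pos htt.1 htt.2

end S16

set_option maxHeartbeats 2000000 in
open S16 Set intervalIntegral in
/-- the paper's Theorem 4.1, strictly monotone case. For continuous
strictly increasing `f` on `[0, 1]` with `c = f 0`, `d = f 1`, and `y i = f (i/(2n))`, the
conditional mathematical expectations
`f_n(x) = (∫_c^d t μ_n(x,t) dt)/(∫_c^d μ_n(x,t) dt)` built from the quantum-mechanical
wave functions converge uniformly to `f` on `[0, 1]` as the quantum number `n → ∞`. -/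
theorem stmt_16 (f : ℝ → ℝ)
    (hf : ContinuousOn f (Set.Icc (0 : ℝ) 1))
    (hmono : StrictMonoOn f (Set.Icc (0 : ℝ) 1)) :
    ∀ ε > 0, ∃ N : ℕ, ∀ n > N, ∀ x ∈ Set.Icc (0 : ℝ) 1,
      |(∫ t in (f 0)..(f 1), t * mufun n (fun i => f ((i : ℝ) / (2 * (n : ℝ)))) x t) /
          (∫ t in (f 0)..(f 1), mufun n (fun i => f ((i : ℝ) / (2 * (n : ℝ)))) x t) - f x|
        < ε := by
  intro ε hε
  have hunif : UniformContinuousOn f (Set.Icc 0 1) :=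
    isCompact_Icc.uniformContinuousOn_of_continuous hf
  rw [Metric.uniformContinuousOn_iff] at hunif
  obtain ⟨δ, hδ, hδf⟩ := hunif ε hε
  obtain ⟨N, hN⟩ := exists_nat_gt (3 / δ)
  refine ⟨N, fun n hn x hx => ?_⟩
  have hn1 : 1 ≤ n := by omega
  have hm0 : (0:ℝ) < 2 * (n:ℝ) := by positivity
  have hdle : ∀ a b : ℝ, a ≤ b → a / (2*(n:ℝ)) ≤ b / (2*(n:ℝ)) := fun a b h => by
    rw [div_le_div_iff₀ hm0 hm0]; nlinarith
  set y : ℕ → ℝ := fun i => f ((i : ℝ) / (2 * (n : ℝ))) with hY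
  have hmem : ∀ j : ℕ, j ≤ 2*n → ((j:ℝ)/(2*(n:ℝ))) ∈ Set.Icc (0:ℝ) 1 := by
    intro j hj
    refine ⟨by positivity, ?_⟩
    rw [div_le_one hm0]
    exact_mod_cast hj
  have ymono : ∀ i j : ℕ, i ≤ j → j ≤ 2*n → y i ≤ y j := by
    intro i j hij hj
    rw [hY]
    exact hmono.monotoneOn (hmem i (le_trans hij hj)) (hmem j hj)
      (hdle _ _ (by exact_mod_cast hij))
  have ystrict : ∀ i j : ℕ, i < j → j ≤ 2*n → y i < y j := by
    intro i j hij hj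
    rw [hY]
    refine hmono (hmem i (by omega)) (hmem j hj) ?_
    rw [div_lt_div_iff₀ hm0 hm0]
    have hc : (i:ℝ) < (j:ℝ) := by exact_mod_cast hij
    nlinarith
  have y0 : y 0 = f 0 := by rw [hY]; norm_num
  have yM : y (2*n) = f 1 := by
    rw [hY]
    have h1 : ((2*n:ℕ):ℝ)/(2*(n:ℝ)) = 1 := by
      have : ((2*n:ℕ):ℝ) = 2*(n:ℝ) := by push_cast; ring
      rw [this, div_self (ne_of_gt hm0)]
    simp only
    rw [h1]
  have hcd : f 0 ≤ f 1 := hmono.monotoneOn (Set.left_mem_Icc.mpr zero_le_one)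
    (Set.right_mem_Icc.mpr zero_le_one) zero_le_one
  -- the index k
  set k : ℕ := min (⌊2*(n:ℝ)*x⌋₊) (2*n - 1) with hk
  have hk2n : k ≤ 2*n - 1 := min_le_right _ _
  have hkx : (k:ℝ)/(2*(n:ℝ)) ≤ x := by
    rw [div_le_iff₀ hm0]
    have h1 : (k:ℝ) ≤ (⌊2*(n:ℝ)*x⌋₊:ℝ) := Nat.cast_le.mpr (min_le_left _ _)
    have h2 : (⌊2*(n:ℝ)*x⌋₊:ℝ) ≤ 2*(n:ℝ)*x := Nat.floor_le (by nlinarith [hx.1])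
    nlinarith
  have hkx2 : x ≤ ((k:ℝ)+1)/(2*(n:ℝ)) := by
    rw [le_div_iff₀ hm0]
    by_cases hfl : ⌊2*(n:ℝ)*x⌋₊ ≤ 2*n - 1
    · have hke : k = ⌊2*(n:ℝ)*x⌋₊ := min_eq_left hfl
      have := Nat.lt_floor_add_one (2*(n:ℝ)*x)
      rw [← hke] at this
      nlinarith
    · have hke : k = 2*n - 1 := min_eq_right (by omega)
      have hkc : (k:ℝ) + 1 = 2*(n:ℝ) := by
        rw [hke]
        have : (2*n - 1 : ℕ) + 1 = 2*n := by omega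
        calc ((2*n-1:ℕ):ℝ) + 1 = (((2*n-1)+1 : ℕ):ℝ) := by push_cast; ring
          _ = ((2*n:ℕ):ℝ) := by rw [this]
          _ = 2*(n:ℝ) := by push_cast; ring
      nlinarith [hx.2]
  -- the sum of the two active A's is 1
  have hcondk : ((k:ℝ) - 1)/(2*(n:ℝ)) ≤ x ∧ x ≤ ((k:ℝ)+1)/(2*(n:ℝ)) :=
    ⟨le_trans (hdle _ _ (by linarith)) hkx, hkx2⟩
  have hcondk1 : (((k+1:ℕ):ℝ) - 1)/(2*(n:ℝ)) ≤ x ∧ x ≤ (((k+1:ℕ):ℝ)+1)/(2*(n:ℝ)) := by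
    constructor
    · push_cast
      have he : ((k:ℝ) + 1 - 1) = (k:ℝ) := by ring
      rw [he]; exact hkx
    · push_cast
      exact le_trans hkx2 (hdle _ _ (by linarith))
  have hsum : qA n k x + qA n (k+1) x = 1 := by
    by_cases hp : k % 2 = 1
    · rw [qA_eval_odd n k x hp hcondk, qA_eval_even n (k+1) x (by omega) hx.1 hx.2 hcondk1]
      exact Real.sin_sq_add_cos_sq _
    · rw [qA_eval_even n k x (by omega) hx.1 hx.2 hcondk, qA_eval_odd n (k+1) x (by omega) hcondk1]
      exact Real.cos_sq_add_sin_sq _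
  -- support of the A's
  have hAsupp : ∀ i : ℕ, qA n i x ≠ 0 → i = k ∨ i = k + 1 := by
    intro i hi
    obtain ⟨⟨hc1, hc2⟩, hsin, hcos⟩ := qA_cond n i x hi
    rw [div_le_iff₀ hm0] at hc1
    rw [le_div_iff₀ hm0] at hc2
    have hkx' : (k:ℝ) ≤ x * (2*(n:ℝ)) := by
      have := hkx; rw [div_le_iff₀ hm0] at this; linarith
    have hkx2' : x * (2*(n:ℝ)) ≤ (k:ℝ) + 1 := by
      have := hkx2; rw [le_div_iff₀ hm0] at this; linarith
    have hik2 : i ≤ k + 2 := by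
      have h1 : (i:ℝ) ≤ ((k+2:ℕ):ℝ) := by push_cast; linarith
      exact_mod_cast h1
    have hki1 : k ≤ i + 1 := by
      have h1 : ((k:ℕ):ℝ) ≤ ((i+1:ℕ):ℝ) := by push_cast; linarith
      exact_mod_cast h1
    have hne2 : i ≠ k + 2 := by
      intro he
      have hieq : (i:ℝ) = (k:ℝ) + 2 := by rw [he]; push_cast; ring
      have hxprod : x * (2*(n:ℝ)) = ((k+1:ℕ):ℝ) := by push_cast; linarith
      have hxv : x = ((k+1:ℕ):ℝ) / (2*(n:ℝ)) := (eq_div_iff (ne_of_gt hm0)).mpr hxprod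
      by_cases hp : i % 2 = 1
      · exact hsin hp (by rw [hxv]; exact sin_zero_of_even n (k+1) (by omega) (by omega))
      · exact hcos (by omega) (by rw [hxv]; exact cos_zero_of_odd n (k+1) (by omega) (by omega))
    have hne0 : i + 1 ≠ k := by
      intro he
      have hieq : (i:ℝ) + 1 = (k:ℝ) := by exact_mod_cast congrArg (Nat.cast (R := ℝ)) he
      have hxprod : x * (2*(n:ℝ)) = ((k:ℕ):ℝ) := by push_cast; linarith
      have hxv : x = ((k:ℕ):ℝ) / (2*(n:ℝ)) := (eq_div_iff (ne_of_gt hm0)).mpr hxprod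
      by_cases hp : i % 2 = 1
      · exact hsin hp (by rw [hxv]; exact sin_zero_of_even n k (by omega) (by omega))
      · exact hcos (by omega) (by rw [hxv]; exact cos_zero_of_odd n k (by omega) (by omega))
    omega
  -- support of μ in t
  have hsupp : ∀ t : ℝ, mufun n y x t ≠ 0 → y (k-1) ≤ t ∧ t ≤ y (min (k+2) (2*n)) := by
    intro t ht
    obtain ⟨i, hi2n, hterm⟩ := mu_ne_zero n y x t ht
    have hA : qA n i x ≠ 0 := fun h => hterm (by rw [h, zero_mul])
    have hB : qB n y i t ≠ 0 := fun h => hterm (by rw [h, mul_zero])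
    have hbs := qB_supp n hn1 y ymono i hi2n t hB
    rcases hAsupp i hA with rfl | rfl
    · exact ⟨hbs.1, le_trans hbs.2 (ymono _ _ (by omega) (by omega))⟩
    · exact ⟨le_trans (ymono (k-1) ((k+1)-1) (by omega) (by omega)) hbs.1,
        le_trans hbs.2 (ymono _ _ (by omega) (by omega))⟩
  -- integrability
  have hmuI : ∀ u v : ℝ, IntervalIntegrable (fun t => mufun n y x t) MeasureTheory.volume u v :=
    fun u v => integrable_of_01 (measurable_mu n y x) (mu_nonneg n y x) (mu_le_one n y x) u v
  have hqBI : ∀ (i : ℕ) (u v : ℝ), IntervalIntegrable (qB n y i) MeasureTheory.volume u v :=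
    fun i u v => integrable_of_01 (measurable_qB n y i) (qB_nonneg n y i) (qB_le_one n y i) u v
  have htmuI : IntervalIntegrable (fun t => t * mufun n y x t) MeasureTheory.volume (f 0) (f 1) := by
    refine intInt_of_bdd (measurable_id.mul (measurable_mu n y x)) (C := |f 0| + |f 1|) ?_
    intro t ht
    rw [Set.uIcc_of_le hcd] at ht
    have h1 : |t| ≤ |f 0| + |f 1| := by
      rw [abs_le]
      constructor
      · linarith [neg_abs_le (f 0), ht.1, abs_nonneg (f 1)]
      · linarith [le_abs_self (f 1), ht.2, abs_nonneg (f 0)]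
    calc |t * mufun n y x t| = |t| * |mufun n y x t| := abs_mul _ _
      _ ≤ |t| * 1 := by
          refine mul_le_mul_of_nonneg_left ?_ (abs_nonneg t)
          rw [abs_le]
          exact ⟨by linarith [mu_nonneg n y x t], mu_le_one n y x t⟩
      _ = |t| := mul_one _
      _ ≤ _ := h1
  -- denominator is positive
  obtain ⟨i₀, hi₀eq, hi₀⟩ : ∃ i₀ : ℕ, (i₀ = k ∨ i₀ = k+1) ∧ 1/2 ≤ qA n i₀ x := by
    by_cases hh : 1/2 ≤ qA n k x
    · exact ⟨k, Or.inl rfl, hh⟩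
    · exact ⟨k+1, Or.inr rfl, by push_neg at hh; linarith⟩
  have hi₀2n : i₀ ≤ 2*n := by rcases hi₀eq with rfl | rfl <;> omega
  have hqBpos : 0 < ∫ t in (f 0)..(f 1), qB n y i₀ t := by
    have h := qB_integral_pos n hn1 y ymono ystrict i₀ hi₀2n
    rwa [y0, yM] at h
  set den := ∫ t in (f 0)..(f 1), mufun n y x t with hden_def
  set num := ∫ t in (f 0)..(f 1), t * mufun n y x t with hnum_def
  have hden : 0 < den := by
    have hmono2 : ∀ t ∈ Set.Icc (f 0) (f 1), (1/2) * qB n y i₀ t ≤ mufun n y x t := fun t _ =>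
      le_trans (mul_le_mul_of_nonneg_right hi₀ (qB_nonneg n y i₀ t)) (le_mu n y x t hi₀2n)
    have h3 : (∫ t in (f 0)..(f 1), (1/2) * qB n y i₀ t) ≤ den :=
      integral_mono_on hcd ((hqBI i₀ _ _).const_mul (1/2)) (hmuI _ _) hmono2
    rw [integral_const_mul] at h3
    linarith
  set a := y (k-1) with ha
  set b := y (min (k+2) (2*n)) with hb
  -- numerator bounds
  have hnumlo : a * den ≤ num := by
    have h1 : ∀ t ∈ Set.Icc (f 0) (f 1), a * mufun n y x t ≤ t * mufun n y x t := by
      intro t ht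
      by_cases hz : mufun n y x t = 0
      · rw [hz, mul_zero, mul_zero]
      · exact mul_le_mul_of_nonneg_right (hsupp t hz).1 (mu_nonneg n y x t)
    have h2 := integral_mono_on hcd ((hmuI _ _).const_mul a) htmuI h1
    rwa [integral_const_mul] at h2
  have hnumhi : num ≤ b * den := by
    have h1 : ∀ t ∈ Set.Icc (f 0) (f 1), t * mufun n y x t ≤ b * mufun n y x t := by
      intro t ht
      by_cases hz : mufun n y x t = 0
      · rw [hz, mul_zero, mul_zero]
      · exact mul_le_mul_of_nonneg_right (hsupp t hz).2 (mu_nonneg n y x t)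
    have h2 := integral_mono_on hcd htmuI ((hmuI _ _).const_mul b) h1
    rwa [integral_const_mul] at h2
  have q1 : a ≤ num / den := (le_div_iff₀ hden).mpr hnumlo
  have q2 : num / den ≤ b := (div_le_iff₀ hden).mpr hnumhi
  -- f x is between a and b
  have hfxa : a ≤ f x := by
    refine le_trans (ymono (k-1) k (by omega) (by omega)) ?_
    have h2 : f ((k:ℝ)/(2*(n:ℝ))) ≤ f x := hmono.monotoneOn (hmem k (by omega)) hx hkx
    simpa [hY] using h2
  have hfxb : f x ≤ b := by
    refine le_trans ?_ (ymono (k+1) (min (k+2) (2*n)) (by omega) (by omega))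
    have h2 : f x ≤ f (((k+1:ℕ):ℝ)/(2*(n:ℝ))) := by
      refine hmono.monotoneOn hx (hmem (k+1) (by omega)) ?_
      push_cast
      exact hkx2
    simpa [hY] using h2
  -- b - a < ε
  have hBA : b - a < ε := by
    have hA'mem := hmem (k-1) (by omega)
    have hB'mem := hmem (min (k+2) (2*n)) (by omega)
    have hle : ((k-1:ℕ):ℝ) ≤ ((min (k+2) (2*n) :ℕ):ℝ) := Nat.cast_le.mpr (by omega)
    have hcast1 : ((min (k+2) (2*n) :ℕ):ℝ) ≤ (k:ℝ) + 2 := by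
      calc ((min (k+2) (2*n) :ℕ):ℝ) ≤ ((k+2:ℕ):ℝ) := Nat.cast_le.mpr (min_le_left _ _)
        _ = (k:ℝ) + 2 := by push_cast; ring
    have hcast2 : (k:ℝ) - 1 ≤ ((k-1:ℕ):ℝ) := by
      rcases Nat.eq_zero_or_pos k with h | h
      · simp [h]
      · rw [Nat.cast_sub h]; push_cast; linarith
    have hdist : dist (((k-1:ℕ):ℝ)/(2*(n:ℝ))) (((min (k+2) (2*n):ℕ):ℝ)/(2*(n:ℝ))) < δ := by
      rw [Real.dist_eq, abs_sub_comm, abs_of_nonneg (sub_nonneg.mpr (hdle _ _ hle))]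
      have h3 : ((min (k+2) (2*n):ℕ):ℝ)/(2*(n:ℝ)) - ((k-1:ℕ):ℝ)/(2*(n:ℝ)) ≤ 3/(2*(n:ℝ)) := by
        rw [← sub_div]
        exact hdle _ 3 (by linarith)
      have h4 : 3/(2*(n:ℝ)) < δ := by
        rw [div_lt_iff₀ hm0]
        have h5 : 3 < (N:ℝ) * δ := by
          have := (div_lt_iff₀ hδ).mp hN
          linarith
        have h6 : (N:ℝ) ≤ (n:ℝ) := Nat.cast_le.mpr (le_of_lt hn)
        nlinarith [mul_le_mul_of_nonneg_left h6 hδ.le, mul_nonneg hδ.le (Nat.cast_nonneg n)]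
      linarith
    have hfd := hδf _ hA'mem _ hB'mem hdist
    rw [Real.dist_eq] at hfd
    have habs := abs_lt.mp hfd
    have hae : a = f (((k-1:ℕ):ℝ)/(2*(n:ℝ))) := by rw [ha, hY]
    have hbe : b = f (((min (k+2) (2*n):ℕ):ℝ)/(2*(n:ℝ))) := by rw [hb, hY]
    rw [hae, hbe]
    linarith [habs.1, habs.2]
  rw [abs_lt]
  constructor <;> linarith
end

section
/- Let f : [0, 1] → ℝ be continuous and strictly increasing, with c = f(0) and d = f(1), and fix n ≥ 1. With m = 2n, x_i = i/m, y_i = f(x_i), the functions A_i on [0, 1] and B_i on [c, d] built from sin²(nπx), cos²(nπx) and from the ground-state densities sin²(π(y − y_{i−1})/(2(y_i − y_{i−1}))), cos²(π(y − y_i)/(2(y_{i+1} − y_i))) as in the quantum construction, and μ_n(x, y) = max_{0≤i≤m} A_i(x)·B_i(y), one has ∫_c^d μ_n(x, y) dy > 0 for every x ∈ [0, 1]. -/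
open scoped Classical

lemma qA_nonneg (n i : ℕ) (x : ℝ) : 0 ≤ qA n i x := by
  unfold qA; split_ifs <;> positivity

lemma qB_nonneg (n : ℕ) (y : ℕ → ℝ) (i : ℕ) (t : ℝ) : 0 ≤ qB n y i t := by
  unfold qB; split_ifs <;> positivity

lemma qA_le_one (n i : ℕ) (x : ℝ) : qA n i x ≤ 1 := by
  unfold qA; split_ifs <;>
    first | exact Real.sin_sq_le_one _ | exact Real.cos_sq_le_one _ | norm_num

lemma qB_le_one (n : ℕ) (y : ℕ → ℝ) (i : ℕ) (t : ℝ) : qB n y i t ≤ 1 := by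
  unfold qB
  split_ifs
  · exact Real.cos_sq_le_one _
  · norm_num
  · exact Real.sin_sq_le_one _
  · norm_num
  · exact Real.sin_sq_le_one _
  · exact Real.cos_sq_le_one _
  · norm_num

lemma measurable_qB (n : ℕ) (y : ℕ → ℝ) (i : ℕ) : Measurable (qB n y i) := by
  unfold qB
  by_cases h0 : i = 0 <;> by_cases h1 : i = 2 * n <;>
      simp only [h0, h1, if_true, if_false]
  all_goals
    repeat
      first
        | exact MeasurableSet.const _
        | exact measurableSet_Icc
        | exact measurableSet_Ioc
        | exact measurable_const
        | apply Measurable.ite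
        | fun_prop

lemma mufun_nonneg (n : ℕ) (y : ℕ → ℝ) (x t : ℝ) : 0 ≤ mufun n y x t := by
  unfold mufun
  refine le_trans (mul_nonneg (qA_nonneg n 0 x) (qB_nonneg n y 0 t)) ?_
  exact Finset.le_sup' (fun i => qA n i x * qB n y i t)
    (Finset.mem_range.mpr (Nat.succ_pos _))

lemma mufun_le_one (n : ℕ) (y : ℕ → ℝ) (x t : ℝ) : mufun n y x t ≤ 1 := by
  unfold mufun
  refine Finset.sup'_le _ _ fun i _ => ?_
  calc qA n i x * qB n y i t ≤ 1 * 1 := by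
        apply mul_le_mul (qA_le_one n i x) (qB_le_one n y i t) (qB_nonneg n y i t) zero_le_one
    _ = 1 := by norm_num

lemma measurable_mufun (n : ℕ) (y : ℕ → ℝ) (x : ℝ) : Measurable (mufun n y x) := by
  have : mufun n y x = (Finset.range (2*n+1)).sup' Finset.nonempty_range_add_one
      (fun i t => qA n i x * qB n y i t) := by
    funext t; rw [Finset.sup'_apply]; rfl
  rw [this]
  exact Finset.measurable_sup' _ fun i _ => (measurable_const.mul (measurable_qB n y i))

lemma mufun_ii (n : ℕ) (y : ℕ → ℝ) (x a b : ℝ) :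
    IntervalIntegrable (mufun n y x) MeasureTheory.volume a b := by
  apply (intervalIntegrable_const (c := (1:ℝ))).mono_fun
    ((measurable_mufun n y x).aestronglyMeasurable)
  filter_upwards with t
  simp only [Real.norm_eq_abs, abs_of_nonneg (mufun_nonneg n y x t)]
  simpa using mufun_le_one n y x t

/-- For continuous strictly increasing `f` on `[0, 1]` with `c = f 0`,
`d = f 1`, `y i = f (i/(2n))` and `n ≥ 1`, the marginal `∫_c^d μ_n(x, t) dt` of the joint
function `μ_n` from the quantum construction is positive for every `x ∈ [0, 1]`. -/
theorem stmt_17 (f : ℝ → ℝ)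
    (hf : ContinuousOn f (Set.Icc (0 : ℝ) 1))
    (hmono : StrictMonoOn f (Set.Icc (0 : ℝ) 1))
    (n : ℕ) (hn : 1 ≤ n) :
    ∀ x ∈ Set.Icc (0 : ℝ) 1,
      0 < ∫ t in (f 0)..(f 1), mufun n (fun i => f ((i : ℝ) / (2 * (n : ℝ)))) x t := by
  intro x hx
  set y : ℕ → ℝ := fun i => f ((i : ℝ) / (2 * (n : ℝ))) with hy
  have hn1 : (1:ℝ) ≤ (n:ℝ) := by exact_mod_cast hn
  have h2n : (0:ℝ) < 2 * (n:ℝ) := by linarith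
  have hmem : ∀ j : ℕ, j ≤ 2*n → (j:ℝ)/(2*(n:ℝ)) ∈ Set.Icc (0:ℝ) 1 := by
    intro j hj
    constructor
    · positivity
    · rw [div_le_one h2n]
      have : (j:ℝ) ≤ ((2*n : ℕ):ℝ) := by exact_mod_cast hj
      push_cast at this ⊢
      linarith
  have hylt : ∀ j k : ℕ, j < k → k ≤ 2*n → y j < y k := by
    intro j k hjk hk
    apply hmono (hmem j (by omega)) (hmem k hk)
    gcongr <;> exact_mod_cast hjk
  have hyle : ∀ j k : ℕ, j ≤ k → k ≤ 2*n → y j ≤ y k := by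
    intro j k hjk hk
    rcases eq_or_lt_of_le hjk with h | h
    · exact le_of_eq (by rw [h])
    · exact (hylt j k h hk).le
  have hy0 : y 0 = f 0 := by simp [hy]
  have hy2n : y (2*n) = f 1 := by
    have h : ((2*n : ℕ):ℝ)/(2*(n:ℝ)) = 1 := by
      push_cast
      field_simp
    simp only [hy, h]
  set K : ℕ := min ⌊2 * (n:ℝ) * x⌋₊ (2*n - 1) with hK
  have hKr : K ≤ 2*n - 1 := by rw [hK]; exact min_le_right _ _
  have hK2n : K + 1 ≤ 2*n := by omega
  have hKle : (K:ℝ)/(2*(n:ℝ)) ≤ x := by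
    rw [div_le_iff₀ h2n]
    have h1' : K ≤ ⌊2*(n:ℝ)*x⌋₊ := by rw [hK]; exact min_le_left _ _
    have h1 : (K:ℝ) ≤ (⌊2*(n:ℝ)*x⌋₊:ℝ) := by exact_mod_cast h1'
    have h2 : (⌊2*(n:ℝ)*x⌋₊:ℝ) ≤ 2*(n:ℝ)*x := Nat.floor_le (by nlinarith [hx.1])
    nlinarith
  have hKge : x ≤ ((K:ℝ)+1)/(2*(n:ℝ)) := by
    rw [le_div_iff₀ h2n]
    rcases le_or_gt ⌊2 * (n:ℝ) * x⌋₊ (2*n - 1) with h | h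
    · have hKeq : K = ⌊2 * (n:ℝ) * x⌋₊ := by rw [hK]; exact min_eq_left h
      have h' := Nat.lt_floor_add_one (2*(n:ℝ)*x)
      rw [hKeq]
      nlinarith
    · have hKeq : K = 2*n - 1 := by rw [hK]; exact min_eq_right (by omega)
      have h' : ((K:ℝ)+1) = 2*(n:ℝ) := by
        rw [hKeq]
        push_cast [Nat.cast_sub (by omega : 1 ≤ 2*n)]
        ring
      rw [h']
      nlinarith [hx.2]
  have hwin : ∀ i : ℕ, K ≤ i → i ≤ K + 1 →
      ((i:ℝ)-1)/(2*(n:ℝ)) ≤ x ∧ x ≤ ((i:ℝ)+1)/(2*(n:ℝ)) := by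
    intro i h1 h2
    have hc1 : (i:ℝ) ≤ (K:ℝ) + 1 := by exact_mod_cast h2
    have hc2 : (K:ℝ) ≤ (i:ℝ) := by exact_mod_cast h1
    constructor
    · refine le_trans ?_ hKle
      gcongr <;> linarith
    · refine le_trans hKge ?_
      gcongr <;> linarith
  obtain ⟨i, hiK, hiK1, hqA⟩ : ∃ i, K ≤ i ∧ i ≤ K + 1 ∧ 0 < qA n i x := by
    by_cases hs : Real.sin ((n:ℝ) * Real.pi * x) = 0
    · -- pick even i
      have key : ∀ i, K ≤ i → i ≤ K + 1 → i % 2 = 0 → 0 < qA n i x := by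
        intro i h1 h2 hev
        unfold qA
        rw [if_neg (by omega), if_pos ⟨max_le hx.1 (hwin i h1 h2).1,
          le_min hx.2 (hwin i h1 h2).2⟩]
        have hpy := Real.sin_sq_add_cos_sq ((n:ℝ) * Real.pi * x)
        rw [hs] at hpy
        nlinarith
      rcases Nat.even_or_odd K with hk | hk
      · rw [Nat.even_iff] at hk
        exact ⟨K, le_rfl, by omega, key K le_rfl (by omega) (by omega)⟩
      · rw [Nat.odd_iff] at hk
        exact ⟨K+1, by omega, le_rfl, key (K+1) (by omega) le_rfl (by omega)⟩
    · -- pick odd i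
      have key : ∀ i, K ≤ i → i ≤ K + 1 → i % 2 = 1 → 0 < qA n i x := by
        intro i h1 h2 hodd
        unfold qA
        rw [if_pos hodd, if_pos (hwin i h1 h2)]
        exact lt_of_le_of_ne (sq_nonneg _) (Ne.symm (pow_ne_zero 2 hs))
      rcases Nat.even_or_odd K with hk | hk
      · rw [Nat.even_iff] at hk
        exact ⟨K+1, by omega, le_rfl, key (K+1) (by omega) le_rfl (by omega)⟩
      · rw [Nat.odd_iff] at hk
        exact ⟨K, le_rfl, by omega, key K le_rfl (by omega) hk⟩
  have hi2n : i ≤ 2 * n := le_trans hiK1 hK2n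
  have hpi := Real.pi_pos
  obtain ⟨a, b, hca, hab, hbd, hB⟩ :
      ∃ a b, f 0 ≤ a ∧ a < b ∧ b ≤ f 1 ∧ ∀ t ∈ Set.Ioo a b, 0 < qB n y i t := by
    rcases eq_or_ne i 0 with h0 | h0
    · refine ⟨y 0, y 1, le_of_eq hy0.symm, hylt 0 1 one_pos (by omega),
        by rw [← hy2n]; exact hyle 1 (2*n) (by omega) le_rfl, ?_⟩
      intro t ht
      have hL : 0 < y 1 - y 0 := sub_pos.mpr (hylt 0 1 one_pos (by omega))
      unfold qB
      rw [if_pos h0, if_pos ⟨ht.1.le, ht.2.le⟩]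
      refine pow_pos (Real.cos_pos_of_mem_Ioo ⟨?_, ?_⟩) 2
      · have : (0:ℝ) ≤ Real.pi * (t - y 0) / (2*(y 1 - y 0)) :=
          div_nonneg (mul_nonneg hpi.le (by linarith [ht.1])) (by linarith)
        linarith
      · rw [div_lt_iff₀ (by linarith)]
        have h' : t - y 0 < y 1 - y 0 := by linarith [ht.2]
        nlinarith
    · rcases eq_or_ne i (2*n) with h2 | h2
      · refine ⟨y (2*n-1), y (2*n), by rw [← hy0]; exact hyle 0 (2*n-1) (by omega) (by omega),
          hylt (2*n-1) (2*n) (by omega) le_rfl, le_of_eq hy2n, ?_⟩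
        intro t ht
        have hL : 0 < y (2*n) - y (2*n-1) := sub_pos.mpr (hylt (2*n-1) (2*n) (by omega) le_rfl)
        unfold qB
        rw [if_neg h0, if_pos h2, if_pos ⟨ht.1.le, ht.2.le⟩]
        refine pow_pos (Real.sin_pos_of_pos_of_lt_pi ?_ ?_) 2
        · exact div_pos (mul_pos hpi (by linarith [ht.1])) (by linarith)
        · rw [div_lt_iff₀ (by linarith)]
          have h' : t - y (2*n-1) < y (2*n) - y (2*n-1) := by linarith [ht.2]
          nlinarith
      · refine ⟨y (i-1), y i, by rw [← hy0]; exact hyle 0 (i-1) (by omega) (by omega),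
          hylt (i-1) i (by omega) hi2n, by rw [← hy2n]; exact hyle i (2*n) hi2n le_rfl, ?_⟩
        intro t ht
        have hL : 0 < y i - y (i-1) := sub_pos.mpr (hylt (i-1) i (by omega) hi2n)
        unfold qB
        rw [if_neg h0, if_neg h2, if_pos ⟨ht.1.le, ht.2.le⟩]
        refine pow_pos (Real.sin_pos_of_pos_of_lt_pi ?_ ?_) 2
        · exact div_pos (mul_pos hpi (by linarith [ht.1])) (by linarith)
        · rw [div_lt_iff₀ (by linarith)]
          have h' : t - y (i-1) < y i - y (i-1) := by linarith [ht.2]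
          nlinarith
  have hpos : ∀ t ∈ Set.Ioo a b, 0 < mufun n y x t := by
    intro t ht
    refine lt_of_lt_of_le (mul_pos hqA (hB t ht)) ?_
    unfold mufun
    exact Finset.le_sup' (fun j => qA n j x * qB n y j t)
      (Finset.mem_range.mpr (by omega))
  have hii : ∀ u v : ℝ, IntervalIntegrable (mufun n y x) MeasureTheory.volume u v :=
    fun u v => mufun_ii n y x u v
  have key : ∫ t in (f 0)..(f 1), mufun n y x t =
      (∫ t in (f 0)..a, mufun n y x t) + ((∫ t in a..b, mufun n y x t)
        + (∫ t in b..(f 1), mufun n y x t)) := by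
    rw [intervalIntegral.integral_add_adjacent_intervals (hii a b) (hii b (f 1)),
        intervalIntegral.integral_add_adjacent_intervals (hii (f 0) a) (hii a (f 1))]
  rw [key]
  have h1 : 0 ≤ ∫ t in (f 0)..a, mufun n y x t :=
    intervalIntegral.integral_nonneg hca (fun u _ => mufun_nonneg n y x u)
  have h3 : 0 ≤ ∫ t in b..(f 1), mufun n y x t :=
    intervalIntegral.integral_nonneg hbd (fun u _ => mufun_nonneg n y x u)
  have h2 : 0 < ∫ t in a..b, mufun n y x t :=
    intervalIntegral.intervalIntegral_pos_of_pos_on (hii a b) hpos hab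
  linarith
end
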